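/- arXiv:1604.06124 — 9 statements merged into one kernel-verified Lean document; each statement's English description precedes it below -/
import Mathlib

section
/- Let b, c : ℕ⁺ → ℂ be arbitrary arithmetic functions and let a be their Dirichlet convolution, a(n) = ∑_{de=n} b(d) c(e). Then for all positive integers n and r, a(nr) = ∑_{r₁ r₂ = r} ∑_{m₁ m₂ = n, gcd(m₂, r₁) = 1} b(m₁ r₁) c(m₂ r₂), where the outer sum is over ordered factorizations r = r₁ r₂ and the inner sum is over ordered factorizations n = m₁ m₂ with m₂ coprime to r₁. -/
open scoped BigOperators

private lemma dcs_key (n r d e : ℕ) (hn : 0 < n) (hr : 0 < r) (hde : d * e = n * r) :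
    (d / Nat.gcd d n) ∣ r ∧ e = (n / Nat.gcd d n) * (r / (d / Nat.gcd d n)) := by
  have hd : 0 < d := by
    rcases Nat.eq_zero_or_pos d with h | h
    · subst h; simp [Nat.mul_eq_zero] at hde; omega
    · exact h
  set g := Nat.gcd d n with hgdef
  have hg : 0 < g := Nat.gcd_pos_of_pos_left n hd
  have hgd : g ∣ d := Nat.gcd_dvd_left d n
  have hgn : g ∣ n := Nat.gcd_dvd_right d n
  have cop : Nat.Coprime (d / g) (n / g) := Nat.coprime_div_gcd_div_gcd hg
  have h1 : d ∣ n * r := ⟨e, hde.symm⟩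
  have h2 : g * (d / g) ∣ g * ((n / g) * r) := by
    rw [Nat.mul_div_cancel' hgd, ← mul_assoc, Nat.mul_div_cancel' hgn]
    exact h1
  have h3 : d / g ∣ (n / g) * r := (Nat.mul_dvd_mul_iff_left hg).mp h2
  have hq1r : (d / g) ∣ r := (Nat.Coprime.dvd_of_dvd_mul_left cop h3)
  refine ⟨hq1r, ?_⟩
  have hpos : 0 < g * (d / g) := by
    rw [Nat.mul_div_cancel' hgd]; exact hd
  apply Nat.eq_of_mul_eq_mul_left hpos
  calc g * (d / g) * e = d * e := by rw [Nat.mul_div_cancel' hgd]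
    _ = n * r := hde
    _ = (g * (n / g)) * ((d / g) * (r / (d / g))) := by
        rw [Nat.mul_div_cancel' hgn, Nat.mul_div_cancel' hq1r]
    _ = g * (d / g) * ((n / g) * (r / (d / g))) := by ring

theorem dirichlet_convolution_shift (b c : ℕ → ℂ) (n r : ℕ) (hn : 0 < n) (hr : 0 < r) :
    (∑ p ∈ (n * r).divisorsAntidiagonal, b p.1 * c p.2)
      = ∑ q ∈ r.divisorsAntidiagonal,
          ∑ m ∈ n.divisorsAntidiagonal.filter (fun m => Nat.Coprime m.2 q.1),
            b (m.1 * q.1) * c (m.2 * q.2) := by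
  rw [Finset.sum_sigma']
  refine Finset.sum_nbij'
    (i := fun p => ⟨(p.1 / Nat.gcd p.1 n, r / (p.1 / Nat.gcd p.1 n)),
                    (Nat.gcd p.1 n, n / Nat.gcd p.1 n)⟩)
    (j := fun x => (x.2.1 * x.1.1, x.2.2 * x.1.2)) ?_ ?_ ?_ ?_ ?_
  · rintro ⟨d, e⟩ hp
    rw [Nat.mem_divisorsAntidiagonal] at hp
    obtain ⟨hde, hnr⟩ := hp
    simp only at hde
    obtain ⟨hq1r, he⟩ := dcs_key n r d e hn hr hde
    have hd : 0 < d := by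
      rcases Nat.eq_zero_or_pos d with h | h
      · subst h; simp at hde; omega
      · exact h
    have hg : 0 < Nat.gcd d n := Nat.gcd_pos_of_pos_left n hd
    simp only [Finset.mem_sigma, Finset.mem_filter, Nat.mem_divisorsAntidiagonal]
    refine ⟨⟨Nat.mul_div_cancel' hq1r, by positivity⟩,
      ⟨⟨Nat.mul_div_cancel' (Nat.gcd_dvd_right d n), by positivity⟩, ?_⟩⟩
    exact (Nat.coprime_div_gcd_div_gcd hg).symm
  · rintro ⟨⟨q1, q2⟩, m1, m2⟩ hx
    simp only [Finset.mem_sigma, Finset.mem_filter, Nat.mem_divisorsAntidiagonal] at hx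
    obtain ⟨⟨hq, -⟩, ⟨hm, -⟩, -⟩ := hx
    rw [Nat.mem_divisorsAntidiagonal]
    constructor
    · simp only; rw [← hq, ← hm]; ring
    · positivity
  · rintro ⟨d, e⟩ hp
    rw [Nat.mem_divisorsAntidiagonal] at hp
    obtain ⟨hde, -⟩ := hp
    simp only at hde
    obtain ⟨hq1r, he⟩ := dcs_key n r d e hn hr hde
    simp only [Prod.mk.injEq]
    exact ⟨by rw [Nat.mul_div_cancel' (Nat.gcd_dvd_left d n)], he.symm⟩
  · rintro ⟨⟨q1, q2⟩, m1, m2⟩ hx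
    simp only [Finset.mem_sigma, Finset.mem_filter, Nat.mem_divisorsAntidiagonal] at hx
    obtain ⟨⟨hq, -⟩, ⟨hm, -⟩, hcop⟩ := hx
    have hm1 : 0 < m1 := by
      rcases Nat.eq_zero_or_pos m1 with h | h
      · subst h; simp at hm; omega
      · exact h
    have hq1 : 0 < q1 := by
      rcases Nat.eq_zero_or_pos q1 with h | h
      · subst h; simp at hq; omega
      · exact h
    have hgcd : Nat.gcd (m1 * q1) n = m1 := by
      rw [← hm, Nat.gcd_mul_left, Nat.Coprime.gcd_eq_one hcop.symm, mul_one]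
    have h1 : r / q1 = q2 := by rw [← hq, Nat.mul_div_cancel_left _ hq1]
    have h2 : n / m1 = m2 := by rw [← hm, Nat.mul_div_cancel_left _ hm1]
    simp [hgcd, Nat.mul_div_cancel_left _ hm1, h1, h2]
  · rintro ⟨d, e⟩ hp
    rw [Nat.mem_divisorsAntidiagonal] at hp
    obtain ⟨hde, -⟩ := hp
    simp only at hde
    obtain ⟨hq1r, he⟩ := dcs_key n r d e hn hr hde
    simp only
    rw [Nat.mul_div_cancel' (Nat.gcd_dvd_left d n), ← he]
end

section
/- Let α, γ be complex numbers, r a positive integer, and w a complex number with Re(w+α) > 1 and Re(w+γ) > 1. Then ∑_{m=1}^∞ I_{α,γ}(mr) m^{-w} converges absolutely and equals ζ(w+α) · r^{-α} · Φ(γ-α, r) / (Φ(w+γ, r) · ζ(w+γ)). -/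
open scoped BigOperators

/-- `Ifun α γ n = ∑_{de = n} μ(e) d^{-α} e^{-γ}`. -/
noncomputable def Ifun (α γ : ℂ) (n : ℕ) : ℂ :=
  ∑ p ∈ n.divisorsAntidiagonal,
    (ArithmeticFunction.moebius p.2 : ℂ) * (p.1 : ℂ) ^ (-α) * (p.2 : ℂ) ^ (-γ)

/-- `Phi x q = ∏_{p ∣ q} (1 - p^{-x})`, the product over primes dividing `q`. -/
noncomputable def Phi (x : ℂ) (q : ℕ) : ℂ :=
  ∏ p ∈ q.primeFactors, (1 - (p : ℂ) ^ (-x))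

section Aux
open Complex ArithmeticFunction

lemma natCast_mul_cpow (m n : ℕ) (z : ℂ) : ((m*n : ℕ):ℂ)^z = (m:ℂ)^z * (n:ℂ)^z := by
  rw [Nat.cast_mul, ← Complex.ofReal_natCast m, ← Complex.ofReal_natCast n,
    mul_cpow_ofReal_nonneg (Nat.cast_nonneg m) (Nat.cast_nonneg n)]

lemma norm_moebius_le (n : ℕ) : ‖((moebius n : ℤ) : ℂ)‖ ≤ 1 := by
  by_cases h : Squarefree n
  · rw [ArithmeticFunction.moebius_apply_of_squarefree h]; simp
  · rw [ArithmeticFunction.moebius_eq_zero_of_not_squarefree h]; simp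

lemma summable_norm_cpow {z : ℂ} (hz : 1 < z.re) : Summable (fun n:ℕ => ‖(n:ℂ)^(-z)‖) := by
  have e : ∀ n:ℕ, ‖(n:ℂ)^(-z)‖ = (n:ℝ)^(-z.re) := fun n => by
    rw [Complex.norm_natCast_cpow_of_re_ne_zero n (by simp; positivity), neg_re]
  simp only [e]
  exact Real.summable_nat_rpow.mpr (by linarith)

section U
variable {s t : ℂ} {r : ℕ}

noncomputable def Uf (s t : ℂ) (r : ℕ) : ℕ → ℂ :=
  fun e => ((moebius e : ℤ) : ℂ) * (e:ℂ)^(-t) * ((Nat.gcd r e : ℕ):ℂ)^s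

lemma Uf_summable (hr : 0 < r) (hs : 0 ≤ s.re) (ht : 1 < t.re) :
    Summable (fun e => ‖Uf s t r e‖) := by
  refine Summable.of_nonneg_of_le (fun e => norm_nonneg _) (fun e => ?_)
    (((summable_norm_cpow ht).mul_left ((r:ℝ)^(s.re))))
  have hg : 0 < Nat.gcd r e := Nat.gcd_pos_of_pos_left e hr
  have h1 : ‖((Nat.gcd r e : ℕ):ℂ)^s‖ ≤ (r:ℝ)^(s.re) := by
    rw [Complex.norm_natCast_cpow_of_pos hg]
    exact Real.rpow_le_rpow (by positivity) (Nat.cast_le.mpr (Nat.gcd_le_left e hr)) hs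
  calc ‖Uf s t r e‖ = ‖((moebius e : ℤ) : ℂ)‖ * ‖(e:ℂ)^(-t)‖ * ‖((Nat.gcd r e : ℕ):ℂ)^s‖ := by
        simp [Uf, norm_mul]
    _ ≤ 1 * ‖(e:ℂ)^(-t)‖ * ((r:ℝ)^(s.re)) :=
        mul_le_mul (mul_le_mul_of_nonneg_right (norm_moebius_le e) (norm_nonneg _)) h1
          (norm_nonneg _) (by positivity)
    _ = (r:ℝ)^(s.re) * ‖(e:ℂ)^(-t)‖ := by ring

lemma Uf_hasProd (hr : 0 < r) (hs : 0 ≤ s.re) (ht : 1 < t.re) :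
    HasProd (fun p : Nat.Primes => 1 - (p:ℂ)^(-t) * ((Nat.gcd r p : ℕ):ℂ)^s)
      (∑' e, Uf s t r e) := by
  have hf₁ : Uf s t r 1 = 1 := by simp [Uf]
  have hmul : ∀ {m n : ℕ}, Nat.Coprime m n → Uf s t r (m*n) = Uf s t r m * Uf s t r n := by
    intro m n h
    simp only [Uf]
    rw [isMultiplicative_moebius.map_mul_of_coprime h, h.gcd_mul r, natCast_mul_cpow,
      natCast_mul_cpow]
    push_cast
    ring
  have hf₀ : Uf s t r 0 = 0 := by simp [Uf]
  have H := EulerProduct.eulerProduct_hasProd hf₁ hmul (Uf_summable hr hs ht) hf₀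
  convert H using 2 with p
  have hp := p.prop
  rw [tsum_eq_sum (s := Finset.range 2) (f := fun k => Uf s t r ((p:ℕ)^k)) ?side]
  · rw [Finset.sum_range_succ, Finset.sum_range_one, pow_zero, hf₁, pow_one]
    simp only [Uf, moebius_apply_prime hp]
    push_cast
    ring
  case side =>
    intro k hk
    simp only [Finset.mem_range, not_lt] at hk
    simp only [Uf, moebius_apply_prime_pow hp (by omega : k ≠ 0),
      if_neg (by omega : ¬ k = 1)]
    simp
end U

section U2
variable {s t : ℂ} {r : ℕ}

lemma tsum_moebius (ht : 1 < t.re) :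
    ∑' n:ℕ, ((moebius n : ℤ) : ℂ) * (n:ℂ)^(-t) = (riemannZeta t)⁻¹ := by
  have h1 := LSeries_zeta_mul_Lseries_moebius ht
  rw [LSeries_zeta_eq_riemannZeta ht] at h1
  have h2 : LSeries (fun n => ((moebius n : ℤ) : ℂ)) t
      = ∑' n:ℕ, ((moebius n : ℤ) : ℂ) * (n:ℂ)^(-t) := by
    refine tsum_congr fun n => ?_
    rcases eq_or_ne n 0 with rfl | hn
    · simp [LSeries.term_zero]
    · rw [LSeries.term_of_ne_zero hn, cpow_neg, div_eq_mul_inv]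
  rw [h2] at h1
  exact (inv_eq_of_mul_eq_one_right h1).symm

lemma moebius_hasProd (ht : 1 < t.re) :
    HasProd (fun p : Nat.Primes => 1 - (p:ℂ)^(-t)) ((riemannZeta t)⁻¹) := by
  have H := Uf_hasProd (s := 0) (r := 1) one_pos (by simp) ht
  have e1 : (fun p : Nat.Primes => 1 - (p:ℂ)^(-t) * ((Nat.gcd 1 p : ℕ):ℂ)^(0:ℂ))
      = fun p : Nat.Primes => 1 - (p:ℂ)^(-t) := by
    funext p; simp
  have e2 : ∑' e, Uf 0 t 1 e = (riemannZeta t)⁻¹ := by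
    rw [← tsum_moebius ht]
    refine tsum_congr fun n => ?_
    simp [Uf]
  rwa [e1, e2] at H

lemma one_sub_prime_cpow_ne_zero' {p : ℕ} (hp : p.Prime) (ht : 0 < t.re) :
    1 - (p:ℂ)^(-t) ≠ 0 := by
  intro h
  have h1 : (p:ℂ)^(-t) = 1 := by linear_combination -h
  have h2 : ‖(p:ℂ)^(-t)‖ = 1 := by rw [h1]; simp
  rw [Complex.norm_natCast_cpow_of_pos hp.pos, neg_re] at h2
  have h3 : ((p:ℕ):ℝ)^(-t.re) < 1 :=
    Real.rpow_lt_one_of_one_lt_of_neg (by exact_mod_cast hp.one_lt) (by linarith)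
  linarith [h2 ▸ h3]

noncomputable def PS (r : ℕ) : Finset Nat.Primes :=
  r.primeFactors.attach.map
    ⟨fun x => ⟨x.1, Nat.prime_of_mem_primeFactors x.2⟩,
     fun a b hab => Subtype.ext (Subtype.mk_eq_mk.mp hab)⟩

lemma mem_PS {p : Nat.Primes} : p ∈ PS r ↔ (p:ℕ) ∈ r.primeFactors := by
  simp only [PS, Finset.mem_map, Finset.mem_attach, true_and, Function.Embedding.coeFn_mk,
    Subtype.exists]
  constructor
  · rintro ⟨a, ha, rfl⟩; exact ha
  · intro h; exact ⟨(p:ℕ), h, rfl⟩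

lemma prod_PS (h : ℕ → ℂ) : ∏ p ∈ PS r, h p = ∏ x ∈ r.primeFactors, h x := by
  rw [PS, Finset.prod_map]
  exact Finset.prod_attach _ _

lemma U_value (hr : 0 < r) (hs : 0 ≤ s.re) (ht : 1 < t.re) :
    ∑' e, Uf s t r e = ((∏ x ∈ r.primeFactors, (1 - (x:ℂ)^(s-t)))
        / ∏ x ∈ r.primeFactors, (1 - (x:ℂ)^(-t))) * (riemannZeta t)⁻¹ := by
  classical
  set qn : ℕ → ℂ :=
    fun x => if x ∣ r then (1-(x:ℂ)^(s-t))/(1-(x:ℂ)^(-t)) else 1 with hqdef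
  set q : Nat.Primes → ℂ := fun p => qn (p:ℕ) with hq2
  have hq : HasProd q (∏ p ∈ PS r, q p) := by
    refine hasProd_prod_of_ne_finset_one (fun p hp => ?_)
    refine if_neg (fun hd => hp ?_)
    exact mem_PS.mpr (Nat.mem_primeFactors.mpr ⟨p.prop, hd, hr.ne'⟩)
  have key := hq.mul (moebius_hasProd ht)
  have hfun : (fun p : Nat.Primes => q p * (1 - (p:ℂ)^(-t)))
      = fun p : Nat.Primes => 1 - (p:ℂ)^(-t) * ((Nat.gcd r p : ℕ):ℂ)^s := by
    funext p
    have pne : ((p:ℕ):ℂ) ≠ 0 := Nat.cast_ne_zero.mpr p.prop.pos.ne'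
    by_cases hd : (p:ℕ) ∣ r
    · rw [hq2, hqdef]
      simp only [if_pos hd]
      rw [div_mul_cancel₀ _ (one_sub_prime_cpow_ne_zero' p.prop (by linarith))]
      rw [Nat.gcd_eq_right hd, ← cpow_add _ _ pne]
      ring_nf
    · rw [hq2, hqdef]
      simp only [if_neg hd]
      have : Nat.gcd r (p:ℕ) = 1 := Nat.Coprime.gcd_eq_one
        (Nat.coprime_comm.mp ((Nat.Prime.coprime_iff_not_dvd p.prop).mpr hd))
      rw [this, one_mul]
      simp
  rw [hfun] at key
  have huniq := (Uf_hasProd hr hs ht).unique key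
  rw [huniq, prod_PS qn]
  congr 1
  rw [← Finset.prod_div_distrib]
  refine Finset.prod_congr rfl fun x hx => ?_
  rw [hqdef]
  simp only [if_pos (Nat.dvd_of_mem_primeFactors hx)]
end U2

section H
variable {s t : ℂ} {r : ℕ}

noncomputable def Hf (s t : ℂ) (r : ℕ) : ℕ × ℕ → ℂ := fun p =>
  if r ∣ p.1 * p.2 then ((moebius p.2 : ℤ):ℂ) * (p.1:ℂ)^(-s) * (p.2:ℂ)^(-t) else 0

lemma norm_moebius_le' (n : ℕ) : ‖((moebius n : ℤ) : ℂ)‖ ≤ 1 := by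
  by_cases h : Squarefree n
  · rw [ArithmeticFunction.moebius_apply_of_squarefree h]; simp
  · rw [ArithmeticFunction.moebius_eq_zero_of_not_squarefree h]; simp

lemma summable_norm_cpow' {z : ℂ} (hz : 1 < z.re) : Summable (fun n:ℕ => ‖(n:ℂ)^(-z)‖) := by
  have e : ∀ n:ℕ, ‖(n:ℂ)^(-z)‖ = (n:ℝ)^(-z.re) := fun n => by
    rw [Complex.norm_natCast_cpow_of_re_ne_zero n (by simp; positivity), neg_re]
  simp only [e]
  exact Real.summable_nat_rpow.mpr (by linarith)

lemma Hf_norm_summable (hs : 1 < s.re) (ht : 1 < t.re) :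
    Summable (fun p : ℕ × ℕ => ‖Hf s t r p‖) := by
  refine Summable.of_nonneg_of_le (fun p => norm_nonneg _) (fun p => ?_)
    ((summable_norm_cpow' hs).mul_of_nonneg (summable_norm_cpow' ht)
      (fun n => norm_nonneg _) (fun n => norm_nonneg _))
  rcases p with ⟨d, e⟩
  simp only [Hf]
  split_ifs with h
  · calc ‖((moebius e : ℤ):ℂ) * (d:ℂ)^(-s) * (e:ℂ)^(-t)‖
        = ‖((moebius e : ℤ):ℂ)‖ * ‖(d:ℂ)^(-s)‖ * ‖(e:ℂ)^(-t)‖ := by simp [norm_mul]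
      _ ≤ 1 * ‖(d:ℂ)^(-s)‖ * ‖(e:ℂ)^(-t)‖ :=
          mul_le_mul (mul_le_mul_of_nonneg_right (norm_moebius_le' e) (norm_nonneg _)) le_rfl
            (norm_nonneg _) (by norm_num)
      _ = ‖(d:ℂ)^(-s)‖ * ‖(e:ℂ)^(-t)‖ := by ring
  · simp [norm_nonneg]
    positivity

lemma Hf_eq_zero_left (hs : 1 < s.re) {p : ℕ × ℕ} (h : p.1 = 0) : Hf s t r p = 0 := by
  simp only [Hf, h]
  split_ifs
  · rw [Nat.cast_zero, Complex.zero_cpow (by intro hc; rw [neg_eq_zero] at hc; rw [hc] at hs; norm_num at hs)]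
    ring
  · rfl

lemma Hf_eq_zero_right (ht : 1 < t.re) {p : ℕ × ℕ} (h : p.2 = 0) : Hf s t r p = 0 := by
  simp only [Hf, h]
  split_ifs
  · rw [Nat.cast_zero, Complex.zero_cpow (by intro hc; rw [neg_eq_zero] at hc; rw [hc] at ht; norm_num at ht)]
    ring
  · rfl

lemma Hf_eq_zero_of_not_dvd {p : ℕ × ℕ} (h : ¬ r ∣ p.1 * p.2) : Hf s t r p = 0 := by
  simp only [Hf, if_neg h]

end H

section Sigma
variable {s t : ℂ} {r : ℕ}

def Jmap (r : ℕ) : (Σ m : ℕ, {q : ℕ × ℕ // q ∈ ((m+1)*r).divisorsAntidiagonal}) → ℕ × ℕ :=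
  fun x => x.2.1

lemma Jmap_injective (hr : 0 < r) : Function.Injective (Jmap r) := by
  rintro ⟨m, q, hq⟩ ⟨m', q', hq'⟩ h
  simp only [Jmap] at h
  rw [Nat.mem_divisorsAntidiagonal] at hq hq'
  have hm : m = m' := by
    have h1 : (m+1)*r = (m'+1)*r := by rw [← hq.1, ← hq'.1, h]
    have := Nat.eq_of_mul_eq_mul_right hr h1
    omega
  subst hm
  exact congrArg (Sigma.mk m) (Subtype.ext h)

lemma Hf_support_sub_Jmap (hr : 0 < r) (hs : 1 < s.re) (ht : 1 < t.re) :
    Function.support (Hf s t r) ⊆ Set.range (Jmap r) := by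
  intro p hp
  have hdvd : r ∣ p.1 * p.2 := by
    by_contra h
    exact hp (Hf_eq_zero_of_not_dvd h)
  have h1 : p.1 ≠ 0 := fun h => hp (Hf_eq_zero_left hs h)
  have h2 : p.2 ≠ 0 := fun h => hp (Hf_eq_zero_right ht h)
  have hne : p.1 * p.2 ≠ 0 := Nat.mul_ne_zero h1 h2
  have hk : p.1 * p.2 / r ≠ 0 := by
    have hc := Nat.div_mul_cancel hdvd
    intro h
    rw [h, zero_mul] at hc
    exact hne hc.symm
  refine ⟨⟨p.1 * p.2 / r - 1, ⟨p, ?_⟩⟩, rfl⟩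
  rw [Nat.mem_divisorsAntidiagonal]
  constructor
  · have hc := Nat.div_mul_cancel hdvd
    rw [Nat.sub_add_cancel (Nat.one_le_iff_ne_zero.mpr hk), hc]
  · positivity

lemma Hf_tsum_sigma (hr : 0 < r) (hs : 1 < s.re) (ht : 1 < t.re) :
    (Summable fun m : ℕ => ∑ q ∈ ((m+1)*r).divisorsAntidiagonal, ‖Hf s t r q‖) ∧
    ∑' m : ℕ, (∑ q ∈ ((m+1)*r).divisorsAntidiagonal, Hf s t r q) = ∑' p, Hf s t r p := by
  have hnorm := Hf_norm_summable (r := r) hs ht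
  have hsum : Summable (Hf s t r) := hnorm.of_norm
  have hJ := Jmap_injective (r := r) hr
  have hsupp := Hf_support_sub_Jmap (r := r) hr hs ht
  have hcompn : Summable (fun x => ‖Hf s t r (Jmap r x)‖) := hnorm.comp_injective hJ
  have hcomp : Summable (fun x => Hf s t r (Jmap r x)) := hsum.comp_injective hJ
  constructor
  · have := hcompn.sigma
    refine this.congr fun m => ?_
    rw [← Finset.tsum_subtype]
    rfl
  · have h1 : ∑' x, Hf s t r (Jmap r x) = ∑' p, Hf s t r p := hJ.tsum_eq hsupp
    rw [← h1, Summable.tsum_sigma hcomp]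
    refine tsum_congr fun m => ?_
    rw [← Finset.tsum_subtype]
    rfl

end Sigma


section Reparam
variable {s t : ℂ} {r : ℕ}

lemma tsum_cpow_neg {z : ℂ} (hz : 1 < z.re) : ∑' n:ℕ, (n:ℂ)^(-z) = riemannZeta z := by
  rw [zeta_eq_tsum_one_div_nat_cpow hz]
  exact tsum_congr fun n => by rw [cpow_neg, one_div]

def imap (r : ℕ) : ℕ × ℕ → ℕ × ℕ := fun q => (q.2 * (r / Nat.gcd r q.1), q.1)

lemma imap_injective (hr : 0 < r) : Function.Injective (imap r) := by
  rintro ⟨e, k⟩ ⟨e', k'⟩ h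
  simp only [imap, Prod.mk.injEq] at h
  obtain ⟨h1, h2⟩ := h
  subst h2
  have hc : 0 < r / Nat.gcd r e :=
    Nat.div_pos (Nat.le_of_dvd hr (Nat.gcd_dvd_left r e)) (Nat.gcd_pos_of_pos_left e hr)
  have := Nat.eq_of_mul_eq_mul_right hc h1
  simp [this]

lemma div_gcd_dvd_of_dvd_mul (hr : 0 < r) {d e : ℕ} (hdvd : r ∣ d * e) :
    r / Nat.gcd r e ∣ d := by
  set g := Nat.gcd r e with hg
  have hgpos : 0 < g := Nat.gcd_pos_of_pos_left e hr
  have hcg : r / g * g = r := Nat.div_mul_cancel (Nat.gcd_dvd_left r e)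
  obtain ⟨e', he⟩ := Nat.gcd_dvd_right r e
  have hco : Nat.Coprime (r / g) e' := by
    have := Nat.coprime_div_gcd_div_gcd (m := r) (n := e) hgpos
    rwa [← hg, he, Nat.mul_div_cancel_left e' hgpos] at this
  obtain ⟨x, hx⟩ := hdvd
  have hde : d * e' * g = r / g * x * g := by
    calc d * e' * g = d * (g * e') := by ring
      _ = d * e := by rw [← he]
      _ = r * x := hx
      _ = r / g * g * x := by rw [hcg]
      _ = r / g * x * g := by ring
  have : d * e' = r / g * x := Nat.eq_of_mul_eq_mul_right hgpos hde
  exact hco.dvd_of_dvd_mul_right ⟨x, this⟩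

lemma Hf_support_sub_imap (hr : 0 < r) : Function.support (Hf s t r) ⊆ Set.range (imap r) := by
  rintro ⟨d, e⟩ hp
  have hdvd : r ∣ d * e := by
    by_contra h
    exact hp (Hf_eq_zero_of_not_dvd h)
  have hc := div_gcd_dvd_of_dvd_mul hr hdvd
  refine ⟨(e, d / (r / Nat.gcd r e)), ?_⟩
  have hdc : d / (r / Nat.gcd r e) * (r / Nat.gcd r e) = d := Nat.div_mul_cancel hc
  simp [imap, hdc]

lemma Hf_imap_eq (hr : 0 < r) (e k : ℕ) :
    Hf s t r (imap r (e, k)) =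
      (((moebius e : ℤ):ℂ) * (e:ℂ)^(-t) * ((r / Nat.gcd r e : ℕ):ℂ)^(-s)) * (k:ℂ)^(-s) := by
  have hdvd : r ∣ (k * (r / Nat.gcd r e)) * e := by
    obtain ⟨e', he⟩ := Nat.gcd_dvd_right r e
    have hcg : r / Nat.gcd r e * Nat.gcd r e = r := Nat.div_mul_cancel (Nat.gcd_dvd_left r e)
    refine ⟨k * e', ?_⟩
    calc k * (r / Nat.gcd r e) * e = k * (r / Nat.gcd r e) * (Nat.gcd r e * e') := by rw [← he]
      _ = (r / Nat.gcd r e * Nat.gcd r e) * (k * e') := by ring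
      _ = r * (k * e') := by rw [hcg]
  simp only [imap, Hf]
  simp only [hdvd, ↓reduceIte, natCast_mul_cpow]
  ring

lemma Hf_tsum_eq (hr : 0 < r) (hs : 1 < s.re) (ht : 1 < t.re) :
    ∑' p, Hf s t r p = riemannZeta s * (r:ℂ)^(-s) * ∑' e, Uf s t r e := by
  have hnorm := Hf_norm_summable (r := r) hs ht
  have hsum : Summable (Hf s t r) := hnorm.of_norm
  have hi := imap_injective (r := r) hr
  have h1 : ∑' q, Hf s t r (imap r q) = ∑' p, Hf s t r p :=
    hi.tsum_eq (Hf_support_sub_imap hr)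
  have hcomp : Summable (fun q => Hf s t r (imap r q)) := hsum.comp_injective hi
  rw [← h1, Summable.tsum_prod hcomp]
  have hinner : ∀ e : ℕ, ∑' k, Hf s t r (imap r (e, k))
      = (riemannZeta s * (r:ℂ)^(-s)) * Uf s t r e := by
    intro e
    have heq : ∀ k : ℕ, Hf s t r (imap r (e, k)) =
        (((moebius e : ℤ):ℂ) * (e:ℂ)^(-t) * ((r / Nat.gcd r e : ℕ):ℂ)^(-s)) * (k:ℂ)^(-s) :=
      fun k => Hf_imap_eq hr e k
    rw [tsum_congr heq, tsum_mul_left, tsum_cpow_neg hs]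
    -- now: A * ζ s = ζ s * r^{-s} * Uf
    have hgpos : 0 < Nat.gcd r e := Nat.gcd_pos_of_pos_left e hr
    have hgne : ((Nat.gcd r e : ℕ):ℂ) ≠ 0 := Nat.cast_ne_zero.mpr hgpos.ne'
    have hcg : (r / Nat.gcd r e) * Nat.gcd r e = r := Nat.div_mul_cancel (Nat.gcd_dvd_left r e)
    have hsplit : ((r / Nat.gcd r e : ℕ):ℂ)^(-s)
        = (r:ℂ)^(-s) * ((Nat.gcd r e : ℕ):ℂ)^s := by
      have h2 : ((r / Nat.gcd r e : ℕ):ℂ)^(-s) * ((Nat.gcd r e : ℕ):ℂ)^(-s) = (r:ℂ)^(-s) := by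
        rw [← natCast_mul_cpow, hcg]
      have h3 : ((Nat.gcd r e : ℕ):ℂ)^(-s) * ((Nat.gcd r e : ℕ):ℂ)^s = 1 := by
        rw [← cpow_add _ _ hgne, neg_add_cancel, cpow_zero]
      calc ((r / Nat.gcd r e : ℕ):ℂ)^(-s)
          = ((r / Nat.gcd r e : ℕ):ℂ)^(-s) * (((Nat.gcd r e : ℕ):ℂ)^(-s) * ((Nat.gcd r e : ℕ):ℂ)^s) := by
            rw [h3, mul_one]
        _ = (((r / Nat.gcd r e : ℕ):ℂ)^(-s) * ((Nat.gcd r e : ℕ):ℂ)^(-s)) * ((Nat.gcd r e : ℕ):ℂ)^s := by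
            ring
        _ = (r:ℂ)^(-s) * ((Nat.gcd r e : ℕ):ℂ)^s := by rw [h2]
    rw [hsplit, Uf]
    ring
  rw [tsum_congr hinner, tsum_mul_left]

end Reparam

end Aux

open Complex ArithmeticFunction in
theorem Ifun_shifted_dirichlet_series (α γ w : ℂ) (r : ℕ) (hr : 0 < r)
    (hα : 1 < (w + α).re) (hγ : 1 < (w + γ).re) :
    (Summable fun m : ℕ => ‖Ifun α γ ((m + 1) * r) * ((m + 1 : ℕ) : ℂ) ^ (-w)‖) ∧
    ∑' m : ℕ, Ifun α γ ((m + 1) * r) * ((m + 1 : ℕ) : ℂ) ^ (-w)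
      = riemannZeta (w + α) * (r : ℂ) ^ (-α) * Phi (γ - α) r
          / (Phi (w + γ) r * riemannZeta (w + γ)) := by
  set s := w + α with hsdef
  set t := w + γ with htdef
  have hs : 1 < s.re := hα
  have ht : 1 < t.re := hγ
  have hrc : (r:ℂ) ≠ 0 := Nat.cast_ne_zero.mpr hr.ne'
  have term_eq : ∀ m : ℕ, Ifun α γ ((m + 1) * r) * ((m + 1 : ℕ) : ℂ) ^ (-w)
      = (r:ℂ)^w * ∑ q ∈ ((m+1)*r).divisorsAntidiagonal, Hf s t r q := by
    intro m
    rw [Ifun, Finset.sum_mul, Finset.mul_sum]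
    refine Finset.sum_congr rfl fun q hq => ?_
    rw [Nat.mem_divisorsAntidiagonal] at hq
    have hd0 : q.1 ≠ 0 := fun h => hq.2 (by rw [← hq.1, h, zero_mul])
    have he0 : q.2 ≠ 0 := fun h => hq.2 (by rw [← hq.1, h, mul_zero])
    have hd : (q.1:ℂ) ≠ 0 := Nat.cast_ne_zero.mpr hd0
    have he : (q.2:ℂ) ≠ 0 := Nat.cast_ne_zero.mpr he0
    have hdvd : r ∣ q.1 * q.2 := hq.1 ▸ dvd_mul_left r (m+1)
    have hHq : Hf s t r q = ((moebius q.2 : ℤ):ℂ) * (q.1:ℂ)^(-s) * (q.2:ℂ)^(-t) := by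
      simp only [Hf]
      rw [if_pos hdvd]
    rw [hHq]
    have e1 : (q.1:ℂ)^(-s) = (q.1:ℂ)^(-w) * (q.1:ℂ)^(-α) := by
      rw [show -s = -w + -α by rw [hsdef]; ring, cpow_add _ _ hd]
    have e2 : (q.2:ℂ)^(-t) = (q.2:ℂ)^(-w) * (q.2:ℂ)^(-γ) := by
      rw [show -t = -w + -γ by rw [htdef]; ring, cpow_add _ _ he]
    have e3 : (q.1:ℂ)^(-w) * (q.2:ℂ)^(-w) = ((m+1:ℕ):ℂ)^(-w) * (r:ℂ)^(-w) := by
      rw [← natCast_mul_cpow, ← natCast_mul_cpow, hq.1]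
    have e4 : (r:ℂ)^w * (r:ℂ)^(-w) = 1 := by
      rw [← cpow_add _ _ hrc, add_neg_cancel, cpow_zero]
    calc ((moebius q.2 : ℤ):ℂ) * (q.1:ℂ)^(-α) * (q.2:ℂ)^(-γ) * ((m+1:ℕ):ℂ)^(-w)
        = ((moebius q.2 : ℤ):ℂ) * (q.1:ℂ)^(-α) * (q.2:ℂ)^(-γ) * ((m+1:ℕ):ℂ)^(-w)
            * ((r:ℂ)^w * (r:ℂ)^(-w)) := by rw [e4, mul_one]
      _ = (r:ℂ)^w * (((moebius q.2 : ℤ):ℂ) * (q.1:ℂ)^(-α) * (q.2:ℂ)^(-γ)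
            * (((m+1:ℕ):ℂ)^(-w) * (r:ℂ)^(-w))) := by ring
      _ = (r:ℂ)^w * (((moebius q.2 : ℤ):ℂ) * (q.1:ℂ)^(-α) * (q.2:ℂ)^(-γ)
            * ((q.1:ℂ)^(-w) * (q.2:ℂ)^(-w))) := by rw [← e3]
      _ = (r:ℂ)^w * (((moebius q.2 : ℤ):ℂ) * ((q.1:ℂ)^(-w) * (q.1:ℂ)^(-α))
            * ((q.2:ℂ)^(-w) * (q.2:ℂ)^(-γ))) := by ring
      _ = (r:ℂ)^w * (((moebius q.2 : ℤ):ℂ) * (q.1:ℂ)^(-s) * (q.2:ℂ)^(-t)) := by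
            rw [← e1, ← e2]
  have hsig := Hf_tsum_sigma (r := r) hr hs ht
  constructor
  · refine Summable.of_nonneg_of_le (fun m => norm_nonneg _) (fun m => ?_)
      (hsig.1.mul_left ‖(r:ℂ)^w‖)
    rw [term_eq m, norm_mul]
    exact mul_le_mul_of_nonneg_left (norm_sum_le _ _) (norm_nonneg _)
  · have hpow : (r:ℂ)^w * (r:ℂ)^(-s) = (r:ℂ)^(-α) := by
      rw [← cpow_add _ _ hrc]
      congr 1
      rw [hsdef]; ring
    have hPhi1 : (∏ x ∈ r.primeFactors, (1-(x:ℂ)^(s-t))) = Phi (γ - α) r := by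
      rw [Phi]
      refine Finset.prod_congr rfl fun x _ => ?_
      congr 1
      rw [hsdef, htdef]; ring
    have hPhi2 : (∏ x ∈ r.primeFactors, (1-(x:ℂ)^(-t))) = Phi t r := rfl
    calc ∑' m : ℕ, Ifun α γ ((m + 1) * r) * ((m + 1 : ℕ) : ℂ) ^ (-w)
        = ∑' m : ℕ, (r:ℂ)^w * ∑ q ∈ ((m+1)*r).divisorsAntidiagonal, Hf s t r q :=
          tsum_congr term_eq
      _ = (r:ℂ)^w * ∑' m : ℕ, ∑ q ∈ ((m+1)*r).divisorsAntidiagonal, Hf s t r q :=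
          tsum_mul_left
      _ = (r:ℂ)^w * ∑' p, Hf s t r p := by rw [hsig.2]
      _ = (r:ℂ)^w * (riemannZeta s * (r:ℂ)^(-s) * ∑' e, Uf s t r e) := by
          rw [Hf_tsum_eq hr hs ht]
      _ = riemannZeta s * ((r:ℂ)^w * (r:ℂ)^(-s)) * ∑' e, Uf s t r e := by ring
      _ = riemannZeta s * (r:ℂ)^(-α) * ∑' e, Uf s t r e := by rw [hpow]
      _ = riemannZeta s * (r:ℂ)^(-α) * (((∏ x ∈ r.primeFactors, (1-(x:ℂ)^(s-t)))
            / ∏ x ∈ r.primeFactors, (1-(x:ℂ)^(-t))) * (riemannZeta t)⁻¹) := by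
          rw [U_value hr (by linarith) ht]
      _ = riemannZeta s * (r:ℂ)^(-α) * ((Phi (γ - α) r / Phi t r) * (riemannZeta t)⁻¹) := by
          rw [hPhi1, hPhi2]
      _ = riemannZeta s * (r : ℂ) ^ (-α) * Phi (γ - α) r / (Phi t r * riemannZeta t) := by
          rw [div_eq_mul_inv, div_eq_mul_inv, mul_inv]
          ring
end

section
/- Let α, γ be complex numbers with Re(α-γ) < 1 and let p be a prime. Then F_{α,γ}(p) = -p^{α-γ} / (1 - p^{-1+α-γ}). -/
open scoped BigOperators

/-- `Ffun α γ q = q^α ∑_{d∣q} (μ(d) d^{1-α}/φ(d)) ∑_{e∣d} μ(e) e^{α-1}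
(qe/d)^{-α} Φ(γ-α, qe/d)/Φ(1+γ-α, qe/d)`.  Since `d ∣ q` and `e ∣ d`, the
quantity `qe/d` is the natural number `(q/d)*e`. -/
noncomputable def Ffun (α γ : ℂ) (q : ℕ) : ℂ :=
  (q : ℂ) ^ α *
    ∑ d ∈ q.divisors,
      (ArithmeticFunction.moebius d : ℂ) * (d : ℂ) ^ (1 - α) / (Nat.totient d : ℂ) *
        ∑ e ∈ d.divisors,
          (ArithmeticFunction.moebius e : ℂ) * (e : ℂ) ^ (α - 1) *
            ((q / d * e : ℕ) : ℂ) ^ (-α) *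
            Phi (γ - α) (q / d * e) / Phi (1 + γ - α) (q / d * e)

theorem Ffun_prime (α γ : ℂ) (h : (α - γ).re < 1) (p : ℕ) (hp : p.Prime) :
    Ffun α γ p = -(p : ℂ) ^ (α - γ) / (1 - (p : ℂ) ^ (-1 + α - γ)) := by
  have hp1 : (1:ℝ) < (p:ℝ) := by exact_mod_cast hp.one_lt
  have hp0 : (p:ℂ) ≠ 0 := by exact_mod_cast hp.pos.ne'
  have hpm1 : (p:ℂ) - 1 ≠ 0 := by
    intro hc
    have : (p:ℂ) = 1 := by linear_combination hc
    exact hp.one_lt.ne' (by exact_mod_cast this)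
  have hden : (1 : ℂ) - (p:ℂ) ^ (-1 + α - γ) ≠ 0 := by
    intro hc
    have h1 : (p:ℂ) ^ (-1+α-γ) = 1 := by linear_combination -hc
    have h2 : (p:ℝ) ^ (-1+α-γ).re = 1 := by
      have : ‖(((p:ℝ):ℂ) ^ (-1+α-γ))‖ = 1 := by
        rw [show ((p:ℝ):ℂ) = (p:ℂ) by push_cast; ring, h1]; simp
      rwa [Complex.norm_cpow_eq_rpow_re_of_pos (by linarith)] at this
    have hlt : (p:ℝ) ^ (-1+α-γ).re < 1 :=
      Real.rpow_lt_one_of_one_lt_of_neg hp1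
        (by
          have h' := h
          simp only [Complex.sub_re] at h'
          simp only [Complex.add_re, Complex.sub_re, Complex.neg_re, Complex.one_re]
          linarith)
    rw [h2] at hlt; exact lt_irrefl _ hlt
  have hPhi1 : ∀ x : ℂ, Phi x 1 = 1 := by intro x; simp [Phi]
  have hPhip : ∀ x : ℂ, Phi x p = 1 - (p:ℂ) ^ (-x) := by
    intro x; simp [Phi, hp.primeFactors]
  -- key cpow rewrites
  have e1 : (p:ℂ) ^ (-(γ - α)) = (p:ℂ) ^ (α - γ) := by rw [show -(γ-α) = α - γ by ring]
  have e2 : (p:ℂ) ^ (-(1 + γ - α)) = (p:ℂ) ^ (-1 + α - γ) := by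
    rw [show -(1+γ-α) = -1 + α - γ by ring]
  have hA : (p:ℂ) ^ (-1 + α - γ) = (p:ℂ) ^ (α - γ) / p := by
    rw [show (-1:ℂ) + α - γ = (α - γ) - 1 by ring, Complex.cpow_sub _ _ hp0, Complex.cpow_one]
  have hB1 : (p:ℂ) ^ (-α) = ((p:ℂ) ^ α)⁻¹ := Complex.cpow_neg _ _
  have hB2 : (p:ℂ) ^ (1 - α) = p / (p:ℂ) ^ α := by
    rw [Complex.cpow_sub _ _ hp0, Complex.cpow_one]
  have hB3 : (p:ℂ) ^ (α - 1) = (p:ℂ) ^ α / p := by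
    rw [Complex.cpow_sub _ _ hp0, Complex.cpow_one]
  have hB0 : (p:ℂ) ^ α ≠ 0 := by
    simp [Complex.cpow_eq_zero_iff, hp0]
  have htot : (Nat.totient p : ℂ) = (p:ℂ) - 1 := by
    rw [Nat.totient_prime hp, Nat.cast_sub hp.one_lt.le]; simp
  rw [Ffun, hp.divisors, Finset.sum_pair hp.one_lt.ne]
  simp only [Nat.divisors_one, Finset.sum_singleton, Nat.div_one, Nat.div_self hp.pos,
    one_mul, mul_one, Nat.cast_one, ArithmeticFunction.moebius_apply_one,
    ArithmeticFunction.moebius_apply_prime hp, Nat.totient_one,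
    Complex.one_cpow, Int.cast_one, Int.cast_neg, hPhi1, hPhip, htot]
  rw [hp.divisors, Finset.sum_pair hp.one_lt.ne]
  simp only [Nat.cast_one, ArithmeticFunction.moebius_apply_one,
    ArithmeticFunction.moebius_apply_prime hp, Int.cast_one, Int.cast_neg,
    Complex.one_cpow, hPhi1, hPhip, mul_one, one_mul, Nat.div_self hp.pos]
  have hden' : (1:ℂ) - (p:ℂ) ^ (α - γ) / p ≠ 0 := by rwa [hA] at hden
  rw [e1, e2, hA, hB1, hB2, hB3]
  set A := (p:ℂ) ^ (α - γ) with hAd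
  set B := (p:ℂ) ^ α with hBd
  have hpA : (p:ℂ) - A ≠ 0 := by
    intro hc
    apply hden'
    rw [show (1:ℂ) - A / p = ((p:ℂ) - A) / p by field_simp, hc, zero_div]
  field_simp [hB0, hp0, hpm1, hpA, hden']
  ring
end

section
/- Let α, γ be complex numbers with Re(α-γ) < 1, let p be a prime, and let j ≥ 2 be an integer. Then F_{α,γ}(p^j) = 0. -/
open scoped BigOperators

theorem Ffun_prime_power_eq_zero (α γ : ℂ) (h : (α - γ).re < 1) (p : ℕ) (hp : p.Prime)
    (j : ℕ) (hj : 2 ≤ j) :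
    Ffun α γ (p ^ j) = 0 := by
  have hp0 : (p : ℂ) ≠ 0 := Nat.cast_ne_zero.mpr hp.pos.ne'
  have hPhi : ∀ (x : ℂ) (k : ℕ), k ≠ 0 → Phi x (p ^ k) = 1 - (p : ℂ) ^ (-x) := by
    intro x k hk
    rw [Phi, Nat.primeFactors_pow _ hk, hp.primeFactors, Finset.prod_singleton]
  unfold Ffun
  rw [Nat.sum_divisors_prime_pow hp]
  have hsub : ({0, 1} : Finset ℕ) ⊆ Finset.range (j + 1) := by
    intro i hi
    fin_cases hi <;> simp <;> omega
  rw [← Finset.sum_subset hsub (by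
    intro i _ hi
    have h2 : i ≠ 0 ∧ i ≠ 1 := by simpa using hi
    rw [ArithmeticFunction.moebius_apply_prime_pow hp h2.1, if_neg h2.2]
    simp)]
  rw [Finset.sum_pair (by norm_num : (0:ℕ) ≠ 1)]
  simp only [pow_zero, pow_one, Nat.divisors_one, hp.divisors, Finset.sum_singleton,
    Nat.div_one, mul_one]
  rw [Finset.sum_pair hp.one_lt.ne]
  have hd1 : p ^ j / p = p ^ (j - 1) := by
    rw [show p ^ j = p ^ (j-1) * p by rw [← pow_succ]; congr 1; omega]
    rw [Nat.mul_div_assoc _ dvd_rfl, Nat.div_self hp.pos, mul_one]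
  have hd2 : p ^ j / p * p = p ^ j := by rw [hd1, ← pow_succ]; congr 1; omega
  rw [hd2, mul_one, hd1, hPhi (γ - α) j (by omega), hPhi (γ - α) (j-1) (by omega),
    hPhi (1 + γ - α) j (by omega), hPhi (1 + γ - α) (j-1) (by omega),
    ArithmeticFunction.moebius_apply_one, ArithmeticFunction.moebius_apply_prime hp,
    Nat.totient_prime hp, Nat.totient_one]
  push_cast [Nat.cast_sub hp.one_le]
  rw [← Complex.natCast_cpow_natCast_mul p j (-α), ← Complex.natCast_cpow_natCast_mul p (j-1) (-α),
    ← Complex.natCast_cpow_natCast_mul p j α]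
  rw [Nat.cast_sub (by omega : 1 ≤ j), Nat.cast_one]
  have hP1 : (p:ℂ) - 1 ≠ 0 := sub_ne_zero.mpr (by exact_mod_cast hp.one_lt.ne')
  have e1 : (p:ℂ) ^ ((j:ℂ) * α) = ((p:ℂ) ^ (((j:ℂ)-1) * -α) * (p:ℂ) ^ (-α))⁻¹ := by
    rw [show (j:ℂ) * α = -(((j:ℂ)-1) * -α + -α) by ring, Complex.cpow_neg,
      Complex.cpow_add _ _ hp0]
  have e2 : (p:ℂ) ^ ((j:ℂ) * -α) = (p:ℂ) ^ (((j:ℂ)-1) * -α) * (p:ℂ) ^ (-α) := by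
    rw [show (j:ℂ) * -α = ((j:ℂ)-1) * -α + -α by ring, Complex.cpow_add _ _ hp0]
  have e3 : (p:ℂ) ^ ((1:ℂ) - α) = (p:ℂ) * (p:ℂ) ^ (-α) := by
    rw [show (1:ℂ) - α = 1 + -α by ring, Complex.cpow_add _ _ hp0, Complex.cpow_one]
  have e4 : (p:ℂ) ^ (α - 1) = ((p:ℂ) ^ (-α))⁻¹ * (p:ℂ)⁻¹ := by
    rw [show α - 1 = -(-α) + -1 by ring, Complex.cpow_add _ _ hp0, Complex.cpow_neg,
      Complex.cpow_neg_one]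
  rw [e1, e2, e3, e4, Complex.one_cpow, Complex.one_cpow]
  have hu : (p:ℂ) ^ (-α) ≠ 0 := by
    simp [Complex.cpow_eq_zero_iff, hp0]
  have hb : (p:ℂ) ^ (((j:ℂ)-1) * -α) ≠ 0 := by
    simp [Complex.cpow_eq_zero_iff, hp0]
  simp only [mul_div_assoc]
  generalize (1 - (p:ℂ) ^ (-(γ - α))) / (1 - (p:ℂ) ^ (-(1 + γ - α))) = w
  generalize hU : (p:ℂ) ^ (-α) = u at hu ⊢
  generalize hB : (p:ℂ) ^ (((j:ℂ)-1) * -α) = b at hb ⊢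
  field_simp
  ring
end

section
/- Let α, γ be complex numbers with Re(α-γ) < 1. Then F_{α,γ} is multiplicative: F_{α,γ}(1) = 1 and for all coprime positive integers q₁, q₂ one has F_{α,γ}(q₁ q₂) = F_{α,γ}(q₁) F_{α,γ}(q₂). -/
open scoped BigOperators

open scoped Pointwise in
lemma sum_divisors_coprime {m n : ℕ} (h : Nat.Coprime m n) (f : ℕ → ℂ) :
    ∑ d ∈ (m * n).divisors, f d
      = ∑ d₁ ∈ m.divisors, ∑ d₂ ∈ n.divisors, f (d₁ * d₂) := by
  rw [Nat.divisors_mul, Finset.mul_def, Finset.sum_image ?inj]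
  case inj =>
    rintro ⟨a, b⟩ hab ⟨a', b'⟩ hab' (e : a * b = a' * b')
    simp only [Finset.coe_product, Set.mem_prod, Finset.mem_coe, Nat.mem_divisors] at hab hab'
    have ha : a ∣ m := hab.1.1
    have hb : b ∣ n := hab.2.1
    have ha' : a' ∣ m := hab'.1.1
    have hb' : b' ∣ n := hab'.2.1
    have haa : a = a' := by
      refine Nat.dvd_antisymm ?_ ?_
      · exact (Nat.Coprime.dvd_of_dvd_mul_right
          ((Nat.Coprime.coprime_dvd_left ha h).coprime_dvd_right hb') (e ▸ Dvd.intro b rfl))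
      · exact (Nat.Coprime.dvd_of_dvd_mul_right
          ((Nat.Coprime.coprime_dvd_left ha' h).coprime_dvd_right hb) (e ▸ Dvd.intro b' rfl))
    have hapos : 0 < a := Nat.pos_of_dvd_of_pos ha (Nat.pos_of_ne_zero hab.1.2)
    have hbb : b = b' := by subst haa; exact Nat.eq_of_mul_eq_mul_left hapos e
    simp [haa, hbb]
  exact Finset.sum_product _ _ (fun p => f (p.1 * p.2))

lemma Phi_mul {m n : ℕ} (h : Nat.Coprime m n) (x : ℂ) :
    Phi x (m * n) = Phi x m * Phi x n := by
  unfold Phi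
  rw [Nat.Coprime.primeFactors_mul h, Finset.prod_union h.disjoint_primeFactors]

lemma ncpow_mul (m n : ℕ) (s : ℂ) : ((m * n : ℕ) : ℂ) ^ s = (m : ℂ) ^ s * (n : ℂ) ^ s := by
  push_cast
  exact Complex.natCast_mul_natCast_cpow m n s

theorem Ffun_multiplicative (α γ : ℂ) (h : (α - γ).re < 1) :
    Ffun α γ 1 = 1 ∧
    ∀ q₁ q₂ : ℕ, 0 < q₁ → 0 < q₂ → Nat.Coprime q₁ q₂ →
      Ffun α γ (q₁ * q₂) = Ffun α γ q₁ * Ffun α γ q₂ := by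
  constructor
  · simp [Ffun, Phi]
  intro q₁ q₂ h1 h2 hc
  unfold Ffun
  rw [sum_divisors_coprime hc, ncpow_mul, mul_mul_mul_comm, Finset.sum_mul_sum]
  congr 1
  refine Finset.sum_congr rfl fun d₁ hd₁ => Finset.sum_congr rfl fun d₂ hd₂ => ?_
  have hd₁q : d₁ ∣ q₁ := (Nat.mem_divisors.mp hd₁).1
  have hd₂q : d₂ ∣ q₂ := (Nat.mem_divisors.mp hd₂).1
  have hdc : d₁.Coprime d₂ :=
    Nat.Coprime.coprime_dvd_left hd₁q (Nat.Coprime.coprime_dvd_right hd₂q hc)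
  rw [sum_divisors_coprime hdc, mul_mul_mul_comm, Finset.sum_mul_sum]
  congr 1
  · rw [ncpow_mul, ArithmeticFunction.isMultiplicative_moebius.map_mul_of_coprime hdc,
      Nat.totient_mul hdc]
    push_cast
    field_simp
  refine Finset.sum_congr rfl fun e₁ he₁ => Finset.sum_congr rfl fun e₂ he₂ => ?_
  have he₁d : e₁ ∣ d₁ := (Nat.mem_divisors.mp he₁).1
  have he₂d : e₂ ∣ d₂ := (Nat.mem_divisors.mp he₂).1
  have he : e₁.Coprime e₂ :=
    Nat.Coprime.coprime_dvd_left he₁d (Nat.Coprime.coprime_dvd_right he₂d hdc)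
  have hnat : q₁ * q₂ / (d₁ * d₂) * (e₁ * e₂) = q₁ / d₁ * e₁ * (q₂ / d₂ * e₂) := by
    rw [Nat.mul_div_mul_comm hd₁q hd₂q, mul_mul_mul_comm]
  have hq : (q₁ * q₁).Coprime (q₂ * q₂) :=
    (hc.mul_right hc).mul (hc.mul_right hc)
  have hk : (q₁ / d₁ * e₁).Coprime (q₂ / d₂ * e₂) := by
    refine Nat.Coprime.coprime_dvd_left ?_ (Nat.Coprime.coprime_dvd_right ?_ hq)
    · exact mul_dvd_mul (Nat.div_dvd_of_dvd hd₁q) (he₁d.trans hd₁q)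
    · exact mul_dvd_mul (Nat.div_dvd_of_dvd hd₂q) (he₂d.trans hd₂q)
  rw [hnat, Phi_mul hk, Phi_mul hk, ncpow_mul,
    ArithmeticFunction.isMultiplicative_moebius.map_mul_of_coprime he, ncpow_mul]
  push_cast
  ring
end

section
/- Let α, β, γ, δ be complex numbers, p a prime, and x a complex number with |x| < p^{Re(α+β)} and |x| < 1. Then ∑_{j=0}^∞ I_{α,γ}(p^j) I_{β,δ}(p^j) x^j converges and equals (1 - p^{-β-γ} x - p^{-α-δ} x + p^{-γ-δ} x)/(1 - p^{-α-β} x). -/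
open scoped BigOperators

private lemma pow_cpow_aux {p : ℕ} (hp : 0 < p) (k : ℕ) (w : ℂ) :
    ((p : ℂ) ^ k) ^ w = ((p : ℂ) ^ w) ^ k := by
  have harg : Complex.arg (p : ℂ) = 0 := Complex.natCast_arg
  rw [← Complex.cpow_nat_mul' (by rw [harg]; simpa using neg_neg_of_pos Real.pi_pos)
      (by rw [harg]; simp [Real.pi_pos.le]) w, Complex.cpow_nat_mul]

private lemma Ifun_one (α γ : ℂ) : Ifun α γ 1 = 1 := by
  simp [Ifun]

private lemma Ifun_prime_pow {p : ℕ} (hp : p.Prime) (α γ : ℂ) (m : ℕ) :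
    Ifun α γ (p ^ (m + 1))
      = ((p : ℂ) ^ (-α)) ^ m * ((p : ℂ) ^ (-α) - (p : ℂ) ^ (-γ)) := by
  have hp0 : 0 < p := hp.pos
  rw [Ifun, Nat.sum_divisorsAntidiagonal'
    (f := fun d e => (ArithmeticFunction.moebius e : ℂ) * (d : ℂ) ^ (-α) * (e : ℂ) ^ (-γ)),
    Nat.sum_divisors_prime_pow hp]
  have hzero : ∀ i ∈ Finset.range (m + 1 + 1), i ∉ Finset.range 2 →
      (ArithmeticFunction.moebius (p ^ i) : ℂ) * ((p ^ (m + 1) / p ^ i : ℕ) : ℂ) ^ (-α)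
        * ((p ^ i : ℕ) : ℂ) ^ (-γ) = 0 := by
    intro i _ hi2
    simp only [Finset.mem_range, not_lt] at hi2
    rw [ArithmeticFunction.moebius_apply_prime_pow hp (by omega), if_neg (by omega)]
    simp
  rw [← Finset.sum_subset (Finset.range_subset_range.2 (by omega)) hzero]
  have h1 : p ^ (m + 1) / p ^ 1 = p ^ m := by
    rw [Nat.pow_div (by omega) hp0]; simp
  have h0 : p ^ (m + 1) / p ^ 0 = p ^ (m + 1) := by
    rw [Nat.pow_div (by omega) hp0]; norm_num
  rw [Finset.sum_range_succ, Finset.sum_range_one, h0, h1]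
  simp only [pow_zero, pow_one]
  rw [ArithmeticFunction.moebius_apply_one, ArithmeticFunction.moebius_apply_prime hp]
  push_cast
  rw [pow_cpow_aux hp0 (m + 1) (-α), pow_cpow_aux hp0 m (-α)]
  simp [pow_succ]
  ring

theorem Ifun_product_prime_power_series (α β γ δ : ℂ) (p : ℕ) (hp : p.Prime) (x : ℂ)
    (hx1 : ‖x‖ < (p : ℝ) ^ (α + β).re) (hx2 : ‖x‖ < 1) :
    Summable (fun j : ℕ => Ifun α γ (p ^ j) * Ifun β δ (p ^ j) * x ^ j) ∧
    ∑' j : ℕ, Ifun α γ (p ^ j) * Ifun β δ (p ^ j) * x ^ j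
      = (1 - (p : ℂ) ^ (-β - γ) * x - (p : ℂ) ^ (-α - δ) * x + (p : ℂ) ^ (-γ - δ) * x)
          / (1 - (p : ℂ) ^ (-α - β) * x) := by
  have hp0 : (0:ℝ) < (p:ℝ) := by exact_mod_cast hp.pos
  have hpC : (p : ℂ) ≠ 0 := by exact_mod_cast hp.pos.ne'
  set a : ℂ := (p : ℂ) ^ (-α) with ha
  set b : ℂ := (p : ℂ) ^ (-β) with hb
  set c : ℂ := (p : ℂ) ^ (-γ) with hc
  set d : ℂ := (p : ℂ) ^ (-δ) with hd
  set f : ℕ → ℂ := fun j => Ifun α γ (p ^ j) * Ifun β δ (p ^ j) * x ^ j with hf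
  have hab : (p : ℂ) ^ (-α - β) = a * b := by
    rw [show -α - β = -α + -β by ring, Complex.cpow_add _ _ hpC]
  have hbc : (p : ℂ) ^ (-β - γ) = b * c := by
    rw [show -β - γ = -β + -γ by ring, Complex.cpow_add _ _ hpC]
  have had : (p : ℂ) ^ (-α - δ) = a * d := by
    rw [show -α - δ = -α + -δ by ring, Complex.cpow_add _ _ hpC]
  have hcd : (p : ℂ) ^ (-γ - δ) = c * d := by
    rw [show -γ - δ = -γ + -δ by ring, Complex.cpow_add _ _ hpC]
  set r : ℂ := a * b * x with hr
  have hrnorm : ‖r‖ < 1 := by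
    have h1 : ‖a * b‖ = (p:ℝ) ^ (-(α + β).re) := by
      rw [← hab]
      rw [show ((p:ℂ)) = ((p:ℝ):ℂ) by push_cast; ring]
      rw [Complex.norm_cpow_eq_rpow_re_of_pos hp0]
      congr 1
      simp only [Complex.sub_re, Complex.neg_re, Complex.add_re]
      ring
    rw [hr, norm_mul, h1, Real.rpow_neg hp0.le]
    rw [inv_mul_lt_iff₀ (Real.rpow_pos_of_pos hp0 _), mul_one]
    exact hx1
  have hr1 : (1 : ℂ) - r ≠ 0 := by
    intro h
    have : r = 1 := by linear_combination -h
    rw [this] at hrnorm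
    simp at hrnorm
  set K : ℂ := (a - c) * (b - d) * x with hK
  have hshift : ∀ j : ℕ, f (j + 1) = K * r ^ j := by
    intro j
    rw [hf]
    simp only
    rw [Ifun_prime_pow hp α γ j, Ifun_prime_pow hp β δ j, ← ha, ← hb, ← hc, ← hd, hK, hr]
    ring
  have hsum1 : Summable (fun j : ℕ => f (j + 1)) := by
    simp_rw [hshift]
    exact (summable_geometric_of_norm_lt_one hrnorm).mul_left K
  have hsum : Summable f := (summable_nat_add_iff 1).mp hsum1
  refine ⟨hsum, ?_⟩
  have hf0 : f 0 = 1 := by simp [hf, Ifun_one]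
  calc ∑' j : ℕ, f j = f 0 + ∑' j : ℕ, f (j + 1) := hsum.tsum_eq_zero_add
    _ = 1 + K * (1 - r)⁻¹ := by
        rw [hf0]
        congr 1
        simp_rw [hshift]
        rw [tsum_mul_left, tsum_geometric_of_norm_lt_one hrnorm]
    _ = (1 - (p : ℂ) ^ (-β - γ) * x - (p : ℂ) ^ (-α - δ) * x + (p : ℂ) ^ (-γ - δ) * x)
          / (1 - (p : ℂ) ^ (-α - β) * x) := by
        rw [hab, hbc, had, hcd]
        rw [show (1:ℂ) - a * b * x = 1 - r from rfl]
        field_simp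
        ring
end

section
/- Let α, β, γ, δ be complex numbers whose real parts are at most 1/4 in absolute value, and let s be a complex number with Re s > 3/2. Then the Rankin–Selberg-type Dirichlet series ∑_{m=1}^∞ I_{α,γ}(m) I_{β,δ}(m) m^{-s} converges absolutely and equals ζ(s+α+β) · ∏_p (1 - p^{-s-β-γ} - p^{-s-α-δ} + p^{-s-γ-δ}), where the product over all primes p converges absolutely and ζ is the Riemann zeta function. -/
open scoped BigOperators

namespace RSproof

open ArithmeticFunction Complex LSeries


noncomputable def pw (α : ℂ) : ArithmeticFunction ℂ :=
  ⟨fun n => if n = 0 then 0 else (n : ℂ) ^ (-α), by simp⟩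

lemma pw_apply {α : ℂ} {n : ℕ} (hn : n ≠ 0) : pw α n = (n : ℂ) ^ (-α) := by
  simp [pw, hn]

lemma pw_mult (α : ℂ) : (pw α).IsMultiplicative := by
  refine ⟨by simp [pw], ?_⟩
  intro m n _
  rcases eq_or_ne m 0 with rfl | hm
  · simp [pw]
  rcases eq_or_ne n 0 with rfl | hn
  · simp [pw]
  rw [pw_apply (mul_ne_zero hm hn), pw_apply hm, pw_apply hn, Nat.cast_mul,
    Complex.natCast_mul_natCast_cpow]

noncomputable def mob : ArithmeticFunction ℂ := ↑(ArithmeticFunction.moebius)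

lemma mob_apply (n : ℕ) : mob n = ((ArithmeticFunction.moebius n : ℤ) : ℂ) := intCoe_apply

noncomputable def Iaf (α γ : ℂ) : ArithmeticFunction ℂ := pw α * (mob.pmul (pw γ))

lemma Iaf_mult (α γ : ℂ) : (Iaf α γ).IsMultiplicative :=
  (pw_mult α).mul ((isMultiplicative_moebius.intCast).pmul (pw_mult γ))

lemma Iaf_apply (α γ : ℂ) (n : ℕ) : Iaf α γ n = Ifun α γ n := by
  rcases eq_or_ne n 0 with rfl | hn
  · simp [Iaf, Ifun]
  · rw [Iaf, mul_apply]
    simp only [Ifun]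
    refine Finset.sum_congr rfl fun p hp => ?_
    rw [pw_apply (Nat.left_ne_zero_of_mem_divisorsAntidiagonal hp), pmul_apply, mob_apply,
      pw_apply (Nat.right_ne_zero_of_mem_divisorsAntidiagonal hp)]
    ring

noncomputable def Faf (α β γ δ s : ℂ) : ArithmeticFunction ℂ :=
  ((Iaf α γ).pmul (Iaf β δ)).pmul (pw s)

lemma Faf_mult (α β γ δ s : ℂ) : (Faf α β γ δ s).IsMultiplicative :=
  ((Iaf_mult α γ).pmul (Iaf_mult β δ)).pmul (pw_mult s)

lemma Faf_apply (α β γ δ s : ℂ) {n : ℕ} (hn : n ≠ 0) :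
    Faf α β γ δ s n = Ifun α γ n * Ifun β δ n * (n : ℂ) ^ (-s) := by
  rw [Faf, pmul_apply, pmul_apply, Iaf_apply, Iaf_apply, pw_apply hn]

lemma norm_moebius_le_one (n : ℕ) : ‖((ArithmeticFunction.moebius n : ℤ) : ℂ)‖ ≤ 1 := by
  by_cases h : Squarefree n
  · rw [moebius_apply_of_squarefree h]
    push_cast
    rw [norm_pow, norm_neg, norm_one, one_pow]
  · rw [moebius_eq_zero_of_not_squarefree h]
    simp


lemma norm_Ifun_le {α γ : ℂ} (hα : |α.re| ≤ 1/4) (hγ : |γ.re| ≤ 1/4) {n : ℕ} (hn : n ≠ 0) :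
    ‖Ifun α γ n‖ ≤ n.divisorsAntidiagonal.card * (n : ℝ) ^ (1/4 : ℝ) := by
  have hb : ∀ p ∈ n.divisorsAntidiagonal,
      ‖(ArithmeticFunction.moebius p.2 : ℂ) * (p.1 : ℂ) ^ (-α) * (p.2 : ℂ) ^ (-γ)‖
        ≤ (n : ℝ) ^ (1/4 : ℝ) := by
    intro p hp
    have h1 : p.1 ≠ 0 := Nat.left_ne_zero_of_mem_divisorsAntidiagonal hp
    have h2 : p.2 ≠ 0 := Nat.right_ne_zero_of_mem_divisorsAntidiagonal hp
    have hpn : p.1 * p.2 = n := (Nat.mem_divisorsAntidiagonal.mp hp).1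
    have e1 : (1:ℝ) ≤ (p.1 : ℝ) := by exact_mod_cast Nat.one_le_iff_ne_zero.mpr h1
    have e2 : (1:ℝ) ≤ (p.2 : ℝ) := by exact_mod_cast Nat.one_le_iff_ne_zero.mpr h2
    rw [norm_mul, norm_mul, norm_natCast_cpow_of_pos (Nat.pos_of_ne_zero h1),
      norm_natCast_cpow_of_pos (Nat.pos_of_ne_zero h2)]
    have b1 : (p.1 : ℝ) ^ (-α).re ≤ (p.1 : ℝ) ^ (1/4 : ℝ) := by
      refine Real.rpow_le_rpow_of_exponent_le e1 ?_
      have := abs_le.mp hα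
      rw [Complex.neg_re]
      linarith [this.1]
    have b2 : (p.2 : ℝ) ^ (-γ).re ≤ (p.2 : ℝ) ^ (1/4 : ℝ) := by
      refine Real.rpow_le_rpow_of_exponent_le e2 ?_
      have := abs_le.mp hγ
      rw [Complex.neg_re]
      linarith [this.1]
    calc ‖((ArithmeticFunction.moebius p.2 : ℤ) : ℂ)‖ * (p.1 : ℝ) ^ (-α).re
          * (p.2 : ℝ) ^ (-γ).re
        ≤ 1 * ((p.1 : ℝ) ^ (1/4 : ℝ)) * ((p.2 : ℝ) ^ (1/4 : ℝ)) := by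
          have hm := norm_moebius_le_one p.2
          have n1 : (0:ℝ) ≤ (p.1 : ℝ) ^ (-α).re := Real.rpow_nonneg (by positivity) _
          have n2 : (0:ℝ) ≤ (p.2 : ℝ) ^ (-γ).re := Real.rpow_nonneg (by positivity) _
          have n3 : (0:ℝ) ≤ (p.1 : ℝ) ^ (1/4 : ℝ) := Real.rpow_nonneg (by positivity) _
          exact mul_le_mul (mul_le_mul hm b1 n1 (by norm_num)) b2 n2 (by positivity)
      _ = (n : ℝ) ^ (1/4 : ℝ) := by
          rw [one_mul, ← Real.mul_rpow (by positivity) (by positivity), ← Nat.cast_mul, hpn]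
  calc ‖Ifun α γ n‖
      ≤ ∑ p ∈ n.divisorsAntidiagonal,
          ‖(ArithmeticFunction.moebius p.2 : ℂ) * (p.1 : ℂ) ^ (-α) * (p.2 : ℂ) ^ (-γ)‖ :=
        norm_sum_le _ _
    _ ≤ ∑ _p ∈ n.divisorsAntidiagonal, (n : ℝ) ^ (1/4 : ℝ) := Finset.sum_le_sum hb
    _ = _ := by rw [Finset.sum_const, nsmul_eq_mul]


lemma card_sq_le (n : ℕ) :
    n.divisorsAntidiagonal.card * n.divisorsAntidiagonal.card ≤
      ∑ p ∈ n.divisorsAntidiagonal,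
        p.1.divisorsAntidiagonal.card * p.2.divisorsAntidiagonal.card := by
  classical
  have hcard : ∑ p ∈ n.divisorsAntidiagonal,
      p.1.divisorsAntidiagonal.card * p.2.divisorsAntidiagonal.card
      = (n.divisorsAntidiagonal.sigma
          (fun p => p.1.divisorsAntidiagonal ×ˢ p.2.divisorsAntidiagonal)).card := by
    rw [Finset.card_sigma]
    exact Finset.sum_congr rfl fun p _ => (Finset.card_product _ _).symm
  rw [hcard, ← Finset.card_product]
  refine Finset.card_le_card_of_injOn
    (fun q => ⟨q.1, ((Nat.gcd q.1.1 q.2.1, q.1.1 / Nat.gcd q.1.1 q.2.1),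
      (q.2.1 / Nat.gcd q.1.1 q.2.1, q.1.2 / (q.2.1 / Nat.gcd q.1.1 q.2.1)))⟩) ?_ ?_
  · rintro ⟨⟨x, x'⟩, ⟨y, y'⟩⟩ hq
    rw [Finset.mem_coe, Finset.mem_product] at hq
    obtain ⟨hq1, hq2⟩ := hq
    obtain ⟨hx, hn0⟩ := Nat.mem_divisorsAntidiagonal.mp hq1
    obtain ⟨hy, -⟩ := Nat.mem_divisorsAntidiagonal.mp hq2
    have hx0 : x ≠ 0 := Nat.left_ne_zero_of_mem_divisorsAntidiagonal hq1
    have hx'0 : x' ≠ 0 := Nat.right_ne_zero_of_mem_divisorsAntidiagonal hq1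
    have hgx : Nat.gcd x y ∣ x := Nat.gcd_dvd_left x y
    have hgy : Nat.gcd x y ∣ y := Nat.gcd_dvd_right x y
    have hdvd : y / Nat.gcd x y ∣ x' := by
      have h1 : x * (y / Nat.gcd x y) ∣ x * x' := by
        rw [← Nat.mul_div_assoc x hgy]
        have hl : Nat.lcm x y ∣ n := Nat.lcm_dvd ⟨x', hx.symm⟩ ⟨y', hy.symm⟩
        rw [← hx] at hl
        exact hl
      exact (mul_dvd_mul_iff_left hx0).mp h1
    refine Finset.mem_sigma.mpr ⟨hq1, Finset.mem_product.mpr ⟨?_, ?_⟩⟩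
    · exact Nat.mem_divisorsAntidiagonal.mpr ⟨Nat.mul_div_cancel' hgx, hx0⟩
    · exact Nat.mem_divisorsAntidiagonal.mpr ⟨Nat.mul_div_cancel' hdvd, hx'0⟩
  · rintro ⟨⟨x1, x1'⟩, ⟨y1, y1'⟩⟩ h1 ⟨⟨x2, x2'⟩, ⟨y2, y2'⟩⟩ h2 heq
    simp only [Finset.coe_product, Set.mem_prod, Finset.mem_coe] at h1 h2
    obtain ⟨h11, h12⟩ := h1
    obtain ⟨h21, h22⟩ := h2
    obtain ⟨e1, e2h⟩ := Sigma.mk.inj_iff.mp heq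
    have e2 := eq_of_heq e2h
    have ex : x1 = x2 := congrArg Prod.fst e1
    have ex' : x1' = x2' := congrArg Prod.snd e1
    have eg : Nat.gcd x1 y1 = Nat.gcd x2 y2 := congrArg (fun z => z.1.1) e2
    have ey : y1 / Nat.gcd x1 y1 = y2 / Nat.gcd x2 y2 := congrArg (fun z => z.2.1) e2
    subst ex
    subst ex'
    have hy12 : y1 = y2 := by
      calc y1 = Nat.gcd x1 y1 * (y1 / Nat.gcd x1 y1) :=
            (Nat.mul_div_cancel' (Nat.gcd_dvd_right _ _)).symm
        _ = Nat.gcd x1 y2 * (y2 / Nat.gcd x1 y2) := by rw [ey, eg]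
        _ = y2 := Nat.mul_div_cancel' (Nat.gcd_dvd_right _ _)
    subst hy12
    have hy' : y1' = y2' := by
      have ha := (Nat.mem_divisorsAntidiagonal.mp h12).1
      have hb := (Nat.mem_divisorsAntidiagonal.mp h22).1
      have hy0 : y1 ≠ 0 := Nat.left_ne_zero_of_mem_divisorsAntidiagonal h12
      exact Nat.eq_of_mul_eq_mul_left (Nat.pos_of_ne_zero hy0) (ha.trans hb.symm)
    subst hy'
    rfl


noncomputable def Zf : ℕ → ℂ := fun n => ((ArithmeticFunction.zeta n : ℕ) : ℂ)

noncomputable def Hf : ℕ → ℂ :=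
  LSeries.convolution (LSeries.convolution Zf Zf) (LSeries.convolution Zf Zf)

lemma ZZ_apply {d : ℕ} (hd : d ≠ 0) :
    LSeries.convolution Zf Zf d = (d.divisorsAntidiagonal.card : ℂ) := by
  rw [LSeries.convolution_def]
  beta_reduce
  have h : ∀ p ∈ d.divisorsAntidiagonal, Zf p.1 * Zf p.2 = 1 := by
    intro p hp
    have h1 : p.1 ≠ 0 := Nat.left_ne_zero_of_mem_divisorsAntidiagonal hp
    have h2 : p.2 ≠ 0 := Nat.right_ne_zero_of_mem_divisorsAntidiagonal hp
    simp [Zf, ArithmeticFunction.zeta_apply, h1, h2]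
  rw [Finset.sum_congr rfl h, Finset.sum_const, nsmul_eq_mul, mul_one]

lemma Hf_apply {n : ℕ} (hn : n ≠ 0) :
    Hf n = ((∑ p ∈ n.divisorsAntidiagonal,
      p.1.divisorsAntidiagonal.card * p.2.divisorsAntidiagonal.card : ℕ) : ℂ) := by
  rw [Hf, LSeries.convolution_def]
  beta_reduce
  have h : ∀ p ∈ n.divisorsAntidiagonal,
      LSeries.convolution Zf Zf p.1 * LSeries.convolution Zf Zf p.2
        = ((p.1.divisorsAntidiagonal.card * p.2.divisorsAntidiagonal.card : ℕ) : ℂ) := by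
    intro p hp
    rw [ZZ_apply (Nat.left_ne_zero_of_mem_divisorsAntidiagonal hp),
      ZZ_apply (Nat.right_ne_zero_of_mem_divisorsAntidiagonal hp)]
    push_cast
    ring
  rw [Finset.sum_congr rfl h]
  push_cast
  ring

lemma Hf_summable {w : ℂ} (hw : 1 < w.re) : LSeriesSummable Hf w := by
  have h0 : LSeriesSummable Zf w := LSeriesSummable_zeta_iff.mpr hw
  exact (h0.convolution h0).convolution (h0.convolution h0)


set_option maxHeartbeats 1000000 in
lemma summable_main {α β γ' δ' s : ℂ} (hα : |α.re| ≤ 1/4) (hβ : |β.re| ≤ 1/4)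
    (hγ : |γ'.re| ≤ 1/4) (hδ : |δ'.re| ≤ 1/4) (hs : 3/2 < s.re) :
    Summable fun m : ℕ =>
      ‖Ifun α γ' (m + 1) * Ifun β δ' (m + 1) * ((m + 1 : ℕ) : ℂ) ^ (-s)‖ := by
  set w : ℂ := ((s.re - 1/2 : ℝ) : ℂ) with hw_def
  have hw : 1 < w.re := by
    rw [hw_def, Complex.ofReal_re]
    linarith
  have hnorm : Summable fun n => ‖LSeries.term Hf w n‖ :=
    summable_norm_iff.mpr (Hf_summable hw)
  have hshift : Summable fun m : ℕ => ‖LSeries.term Hf w (m + 1)‖ :=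
    (_root_.summable_nat_add_iff 1).mpr hnorm
  refine Summable.of_nonneg_of_le (fun m => norm_nonneg _) (fun m => ?_) hshift
  set n : ℕ := m + 1 with hn_def
  have hn : n ≠ 0 := Nat.succ_ne_zero m
  have hnpos : (0:ℝ) < (n:ℝ) := by exact_mod_cast Nat.succ_pos m
  have hRHS : ‖LSeries.term Hf w n‖
      = ((∑ p ∈ n.divisorsAntidiagonal,
          p.1.divisorsAntidiagonal.card * p.2.divisorsAntidiagonal.card : ℕ) : ℝ)
        / (n:ℝ) ^ (s.re - 1/2) := by
    rw [LSeries.norm_term_eq, if_neg hn, Hf_apply hn]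
    rw [Complex.norm_natCast]
    simp only [hw_def, Complex.ofReal_re]
  rw [hRHS]
  set τn : ℝ := (n.divisorsAntidiagonal.card : ℝ) with hτ_def
  set Nn : ℕ := ∑ p ∈ n.divisorsAntidiagonal,
      p.1.divisorsAntidiagonal.card * p.2.divisorsAntidiagonal.card with hN_def
  have hI1 := norm_Ifun_le hα hγ hn
  have hI2 := norm_Ifun_le hβ hδ hn
  calc ‖Ifun α γ' n * Ifun β δ' n * ((n : ℕ) : ℂ) ^ (-s)‖
      = ‖Ifun α γ' n‖ * ‖Ifun β δ' n‖ * (n:ℝ) ^ (-s).re := by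
        rw [norm_mul, norm_mul, norm_natCast_cpow_of_pos (Nat.pos_of_ne_zero hn)]
    _ ≤ (τn * (n:ℝ) ^ (1/4:ℝ)) * (τn * (n:ℝ) ^ (1/4:ℝ)) * (n:ℝ) ^ (-s).re := by
        have h3 : (0:ℝ) ≤ (n:ℝ) ^ (-s).re := Real.rpow_nonneg hnpos.le _
        exact mul_le_mul_of_nonneg_right
          (mul_le_mul hI1 hI2 (norm_nonneg _) (by positivity)) h3
    _ = (τn * τn) * ((n:ℝ) ^ (1/2:ℝ) * (n:ℝ) ^ (-s).re) := by
        rw [show (1/2:ℝ) = 1/4 + 1/4 by norm_num, Real.rpow_add hnpos]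
        ring
    _ ≤ (Nn : ℝ) * ((n:ℝ) ^ (1/2:ℝ) * (n:ℝ) ^ (-s).re) := by
        have hcast : τn * τn ≤ (Nn : ℝ) := by
          rw [hτ_def, hN_def]
          exact_mod_cast card_sq_le n
        exact mul_le_mul_of_nonneg_right hcast (by positivity)
    _ = (Nn : ℝ) / (n:ℝ) ^ (s.re - 1/2) := by
        rw [Complex.neg_re, ← Real.rpow_add hnpos,
          eq_div_iff (ne_of_gt (Real.rpow_pos_of_pos hnpos _)), mul_assoc,
          ← Real.rpow_add hnpos]
        have h0 : (1/2 + -s.re + (s.re - 1/2) : ℝ) = 0 := by ring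
        rw [h0, Real.rpow_zero, mul_one]


lemma cast_pow_cpow (p m : ℕ) (z : ℂ) : ((p ^ m : ℕ) : ℂ) ^ z = ((p : ℂ) ^ z) ^ m := by
  rw [Nat.cast_pow, ← Complex.natCast_cpow_natCast_mul, Complex.cpow_nat_mul]

lemma Ifun_prime_pow {p : ℕ} (hp : p.Prime) (α γ' : ℂ) (k : ℕ) :
    Ifun α γ' (p ^ (k + 1)) =
      ((p : ℂ) ^ (-α)) ^ (k + 1) - ((p : ℂ) ^ (-α)) ^ k * (p : ℂ) ^ (-γ') := by
  unfold Ifun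
  rw [Nat.sum_divisorsAntidiagonal' (f := fun x y =>
    (ArithmeticFunction.moebius y : ℂ) * (x : ℂ) ^ (-α) * (y : ℂ) ^ (-γ'))]
  rw [Nat.sum_divisors_prime_pow hp]
  rw [Finset.sum_range_succ', Finset.sum_range_succ']
  have hzero : ∑ i ∈ Finset.range k,
      (ArithmeticFunction.moebius (p ^ (i + 1 + 1)) : ℂ)
        * ((p ^ (k + 1) / p ^ (i + 1 + 1) : ℕ) : ℂ) ^ (-α)
        * ((p ^ (i + 1 + 1) : ℕ) : ℂ) ^ (-γ') = 0 := by
    refine Finset.sum_eq_zero fun i _ => ?_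
    rw [ArithmeticFunction.moebius_apply_prime_pow hp (by omega), if_neg (by omega)]
    simp
  rw [hzero]
  have hone : (p : ℕ) ^ (k + 1) / p ^ (0 + 1) = p ^ k := by
    rw [Nat.pow_div (by omega) hp.pos]
    congr 1
  rw [hone]
  simp only [zero_add, pow_zero, pow_one, Nat.div_one, Nat.cast_one, Complex.one_cpow]
  rw [ArithmeticFunction.moebius_apply_one, ArithmeticFunction.moebius_apply_prime hp,
    cast_pow_cpow p (k + 1) (-α), cast_pow_cpow p k (-α)]
  push_cast
  ring


lemma local_tsum {α β γ' δ' s : ℂ} (hα : |α.re| ≤ 1/4) (hβ : |β.re| ≤ 1/4)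
    (hs : 3/2 < s.re) {p : ℕ} (hp : p.Prime) :
    ∑' e : ℕ, Faf α β γ' δ' s (p ^ e)
      = (1 - (p : ℂ) ^ (-(s + α + β)))⁻¹ *
        (1 - (p : ℂ) ^ (-s - β - γ') - (p : ℂ) ^ (-s - α - δ')
          + (p : ℂ) ^ (-s - γ' - δ')) := by
  have hp0 : ((p : ℕ) : ℂ) ≠ 0 := by
    exact_mod_cast hp.pos.ne'
  have hXabx : (p : ℂ) ^ (-(s + α + β)) = (p:ℂ)^(-α) * (p:ℂ)^(-β) * (p:ℂ)^(-s) := by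
    rw [show -(s + α + β) = -α + -β + -s by ring, Complex.cpow_add _ _ hp0,
      Complex.cpow_add _ _ hp0]
  have hr : ‖(p:ℂ)^(-α) * (p:ℂ)^(-β) * (p:ℂ)^(-s)‖ < 1 := by
    rw [← hXabx, norm_natCast_cpow_of_pos hp.pos]
    apply Real.rpow_lt_one_of_one_lt_of_neg
    · exact_mod_cast hp.one_lt
    · have h1 := abs_le.mp hα
      have h2 := abs_le.mp hβ
      simp only [Complex.neg_re, Complex.add_re]
      linarith
  have hne : (1 : ℂ) - (p:ℂ)^(-α) * (p:ℂ)^(-β) * (p:ℂ)^(-s) ≠ 0 := by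
    intro h
    rw [sub_eq_zero] at h
    rw [← h] at hr
    simp at hr
  have hFpow : ∀ k : ℕ, Faf α β γ' δ' s (p ^ (k + 1))
      = ((p:ℂ)^(-α) * (p:ℂ)^(-β) * (p:ℂ)^(-s)) ^ k *
        (((p:ℂ)^(-α) - (p:ℂ)^(-γ')) * ((p:ℂ)^(-β) - (p:ℂ)^(-δ')) * (p:ℂ)^(-s)) := by
    intro k
    rw [Faf_apply α β γ' δ' s (pow_ne_zero _ hp.pos.ne'), Ifun_prime_pow hp,
      Ifun_prime_pow hp, cast_pow_cpow]
    ring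
  have geo := (hasSum_geometric_of_norm_lt_one hr).mul_right
    (((p:ℂ)^(-α) - (p:ℂ)^(-γ')) * ((p:ℂ)^(-β) - (p:ℂ)^(-δ')) * (p:ℂ)^(-s))
  have h1 : HasSum (fun k : ℕ => Faf α β γ' δ' s (p ^ (k + 1)))
      ((1 - (p:ℂ)^(-α) * (p:ℂ)^(-β) * (p:ℂ)^(-s))⁻¹ *
        (((p:ℂ)^(-α) - (p:ℂ)^(-γ')) * ((p:ℂ)^(-β) - (p:ℂ)^(-δ')) * (p:ℂ)^(-s))) := by
    simpa only [hFpow] using geo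
  have h2 := (hasSum_nat_add_iff (f := fun e : ℕ => Faf α β γ' δ' s (p ^ e)) 1).mp h1
  rw [Finset.sum_range_one, pow_zero, (Faf_mult α β γ' δ' s).1] at h2
  rw [h2.tsum_eq, hXabx]
  have e1 : (p : ℂ) ^ (-s - β - γ') = (p:ℂ)^(-s) * (p:ℂ)^(-β) * (p:ℂ)^(-γ') := by
    rw [show -s - β - γ' = -s + -β + -γ' by ring, Complex.cpow_add _ _ hp0,
      Complex.cpow_add _ _ hp0]
  have e2 : (p : ℂ) ^ (-s - α - δ') = (p:ℂ)^(-s) * (p:ℂ)^(-α) * (p:ℂ)^(-δ') := by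
    rw [show -s - α - δ' = -s + -α + -δ' by ring, Complex.cpow_add _ _ hp0,
      Complex.cpow_add _ _ hp0]
  have e3 : (p : ℂ) ^ (-s - γ' - δ') = (p:ℂ)^(-s) * (p:ℂ)^(-γ') * (p:ℂ)^(-δ') := by
    rw [show -s - γ' - δ' = -s + -γ' + -δ' by ring, Complex.cpow_add _ _ hp0,
      Complex.cpow_add _ _ hp0]
  rw [e1, e2, e3]
  field_simp
  ring


lemma normQ_le {α β γ' δ' s : ℂ} (hα : |α.re| ≤ 1/4) (hβ : |β.re| ≤ 1/4)
    (hγ : |γ'.re| ≤ 1/4) (hδ : |δ'.re| ≤ 1/4) (hs : 3/2 < s.re) {p : ℕ} (hp : p.Prime) :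
    ‖(1 - (p : ℂ) ^ (-s - β - γ') - (p : ℂ) ^ (-s - α - δ')
        + (p : ℂ) ^ (-s - γ' - δ')) - 1‖ ≤ 3 * (p : ℝ) ^ (-(s.re - 1/2)) := by
  have hp1 : (1:ℝ) ≤ (p:ℝ) := by exact_mod_cast hp.one_lt.le
  have key : ∀ w : ℂ, w.re ≤ -(s.re - 1/2) → ‖(p:ℂ) ^ w‖ ≤ (p:ℝ) ^ (-(s.re - 1/2)) := by
    intro w hw
    rw [norm_natCast_cpow_of_pos hp.pos]
    exact Real.rpow_le_rpow_of_exponent_le hp1 hw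
  have k1 : ‖(p:ℂ) ^ (-s - β - γ')‖ ≤ (p:ℝ) ^ (-(s.re - 1/2)) := by
    refine key _ ?_
    have h1 := abs_le.mp hβ; have h2 := abs_le.mp hγ
    simp only [Complex.sub_re, Complex.neg_re]
    linarith
  have k2 : ‖(p:ℂ) ^ (-s - α - δ')‖ ≤ (p:ℝ) ^ (-(s.re - 1/2)) := by
    refine key _ ?_
    have h1 := abs_le.mp hα; have h2 := abs_le.mp hδ
    simp only [Complex.sub_re, Complex.neg_re]
    linarith
  have k3 : ‖(p:ℂ) ^ (-s - γ' - δ')‖ ≤ (p:ℝ) ^ (-(s.re - 1/2)) := by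
    refine key _ ?_
    have h1 := abs_le.mp hγ; have h2 := abs_le.mp hδ
    simp only [Complex.sub_re, Complex.neg_re]
    linarith
  have hrw : (1 - (p : ℂ) ^ (-s - β - γ') - (p : ℂ) ^ (-s - α - δ')
      + (p : ℂ) ^ (-s - γ' - δ')) - 1
      = (-((p : ℂ) ^ (-s - β - γ')) - (p : ℂ) ^ (-s - α - δ'))
        + (p : ℂ) ^ (-s - γ' - δ') := by ring
  rw [hrw]
  calc ‖(-((p : ℂ) ^ (-s - β - γ')) - (p : ℂ) ^ (-s - α - δ'))
        + (p : ℂ) ^ (-s - γ' - δ')‖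
      ≤ ‖-((p : ℂ) ^ (-s - β - γ')) - (p : ℂ) ^ (-s - α - δ')‖
        + ‖(p : ℂ) ^ (-s - γ' - δ')‖ := norm_add_le _ _
    _ ≤ (‖-((p : ℂ) ^ (-s - β - γ'))‖ + ‖(p : ℂ) ^ (-s - α - δ')‖)
        + ‖(p : ℂ) ^ (-s - γ' - δ')‖ := by
          gcongr
          exact norm_sub_le _ _
    _ ≤ 3 * (p : ℝ) ^ (-(s.re - 1/2)) := by
          rw [norm_neg]
          linarith

lemma summableQ {α β γ' δ' s : ℂ} (hα : |α.re| ≤ 1/4) (hβ : |β.re| ≤ 1/4)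
    (hγ : |γ'.re| ≤ 1/4) (hδ : |δ'.re| ≤ 1/4) (hs : 3/2 < s.re) :
    Summable fun p : Nat.Primes =>
      ‖(1 - ((p : ℕ) : ℂ) ^ (-s - β - γ') - ((p : ℕ) : ℂ) ^ (-s - α - δ')
          + ((p : ℕ) : ℂ) ^ (-s - γ' - δ')) - 1‖ := by
  have hsum : Summable fun p : Nat.Primes => 3 * ((p : ℕ) : ℝ) ^ (-(s.re - 1/2)) := by
    refine Summable.mul_left 3 ?_
    exact Nat.Primes.summable_rpow.mpr (by linarith)
  exact Summable.of_nonneg_of_le (fun _ => norm_nonneg _)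
    (fun p => normQ_le hα hβ hγ hδ hs p.2) hsum


lemma multipliableQ {α β γ' δ' s : ℂ} (hα : |α.re| ≤ 1/4) (hβ : |β.re| ≤ 1/4)
    (hγ : |γ'.re| ≤ 1/4) (hδ : |δ'.re| ≤ 1/4) (hs : 3/2 < s.re) :
    Multipliable fun p : Nat.Primes =>
      1 - ((p : ℕ) : ℂ) ^ (-s - β - γ') - ((p : ℕ) : ℂ) ^ (-s - α - δ')
        + ((p : ℕ) : ℂ) ^ (-s - γ' - δ') := by
  set Q : Nat.Primes → ℂ := fun p =>
    1 - ((p : ℕ) : ℂ) ^ (-s - β - γ') - ((p : ℕ) : ℂ) ^ (-s - α - δ')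
      + ((p : ℕ) : ℂ) ^ (-s - γ' - δ') with hQ_def
  by_cases hzero : ∃ p0 : Nat.Primes, Q p0 = 0
  · obtain ⟨p0, hp0⟩ := hzero
    refine ⟨0, ?_⟩
    have hev : ∀ᶠ (t : Finset Nat.Primes) in Filter.atTop, (0:ℂ) = ∏ q ∈ t, Q q :=
      (Filter.eventually_ge_atTop {p0}).mono fun t ht =>
        (Finset.prod_eq_zero (ht (Finset.mem_singleton_self p0)) hp0).symm
    exact Filter.Tendsto.congr' hev tendsto_const_nhds
  · push_neg at hzero
    have hlog : Summable fun p : Nat.Primes => Complex.log (Q p) := by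
      have hsum : Summable fun p : Nat.Primes =>
          3/2 * (3 * ((p : ℕ) : ℝ) ^ (-(s.re - 1/2))) :=
        ((Nat.Primes.summable_rpow.mpr (by linarith)).mul_left 3).mul_left (3/2)
      refine Summable.of_norm_bounded_eventually hsum ?_
      have hfin : {p : Nat.Primes | (p : ℕ) < 13}.Finite :=
        Set.Finite.preimage (Function.Injective.injOn Nat.Primes.coe_nat_injective)
          (Set.finite_Iio 13)
      refine Filter.eventually_cofinite.mpr (Set.Finite.subset hfin ?_)
      intro p hp
      simp only [Set.mem_setOf_eq] at hp ⊢
      by_contra hge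
      push_neg at hge
      apply hp
      have hp13 : (13:ℝ) ≤ ((p : ℕ) : ℝ) := by exact_mod_cast hge
      have hQ1 : ‖Q p - 1‖ ≤ 3 * ((p : ℕ) : ℝ) ^ (-(s.re - 1/2)) :=
        normQ_le hα hβ hγ hδ hs p.2
      have hmono : ((p : ℕ) : ℝ) ^ (-(s.re - 1/2)) ≤ ((p : ℕ) : ℝ) ^ (-1 : ℝ) :=
        Real.rpow_le_rpow_of_exponent_le (by linarith) (by linarith)
      have hinv : ((p : ℕ) : ℝ) ^ (-1 : ℝ) = (((p : ℕ) : ℝ))⁻¹ := Real.rpow_neg_one _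
      have hinv13 : (((p : ℕ) : ℝ))⁻¹ ≤ 1/13 := by
        rw [inv_le_comm₀ (by linarith) (by norm_num)]
        linarith
      have hhalf : ‖Q p - 1‖ ≤ 1/2 := by
        rw [hinv] at hmono
        nlinarith
      have hlb := Complex.norm_log_one_add_half_le_self (z := Q p - 1) hhalf
      have hrw : (1 : ℂ) + (Q p - 1) = Q p := by ring
      rw [hrw] at hlb
      nlinarith [Real.rpow_nonneg (show (0:ℝ) ≤ ((p:ℕ):ℝ) by positivity) (-(s.re - 1/2))]
    exact Complex.multipliable_of_summable_log hlog

end RSproof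

theorem rankin_selberg_euler_product (α β γ δ s : ℂ)
    (hα : |α.re| ≤ 1/4) (hβ : |β.re| ≤ 1/4) (hγ : |γ.re| ≤ 1/4) (hδ : |δ.re| ≤ 1/4)
    (hs : 3/2 < s.re) :
    (Summable fun m : ℕ =>
      ‖Ifun α γ (m + 1) * Ifun β δ (m + 1) * ((m + 1 : ℕ) : ℂ) ^ (-s)‖) ∧
    (Summable fun p : Nat.Primes =>
      ‖(1 - ((p : ℕ) : ℂ) ^ (-s - β - γ) - ((p : ℕ) : ℂ) ^ (-s - α - δ)
          + ((p : ℕ) : ℂ) ^ (-s - γ - δ)) - 1‖) ∧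
    Multipliable (fun p : Nat.Primes =>
      1 - ((p : ℕ) : ℂ) ^ (-s - β - γ) - ((p : ℕ) : ℂ) ^ (-s - α - δ)
        + ((p : ℕ) : ℂ) ^ (-s - γ - δ)) ∧
    ∑' m : ℕ, Ifun α γ (m + 1) * Ifun β δ (m + 1) * ((m + 1 : ℕ) : ℂ) ^ (-s)
      = riemannZeta (s + α + β) *
          ∏' p : Nat.Primes,
            (1 - ((p : ℕ) : ℂ) ^ (-s - β - γ) - ((p : ℕ) : ℂ) ^ (-s - α - δ)
              + ((p : ℕ) : ℂ) ^ (-s - γ - δ)) := by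
  have hsum1 := RSproof.summable_main hα hβ hγ hδ hs
  have hQsum := RSproof.summableQ hα hβ hγ hδ hs
  have hQmult := RSproof.multipliableQ hα hβ hγ hδ hs
  refine ⟨hsum1, hQsum, hQmult, ?_⟩
  have hFsum : Summable fun n : ℕ => ‖RSproof.Faf α β γ δ s n‖ := by
    refine (_root_.summable_nat_add_iff 1).mp ?_
    refine hsum1.congr fun m => ?_
    rw [RSproof.Faf_apply α β γ δ s (Nat.succ_ne_zero m)]
  have heuler := (RSproof.Faf_mult α β γ δ s).eulerProduct_hasProd hFsum
  have hlocal : (fun p : Nat.Primes => ∑' e : ℕ, RSproof.Faf α β γ δ s ((p : ℕ) ^ e))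
      = fun p : Nat.Primes => (1 - ((p : ℕ) : ℂ) ^ (-(s + α + β)))⁻¹ *
          (1 - ((p : ℕ) : ℂ) ^ (-s - β - γ) - ((p : ℕ) : ℂ) ^ (-s - α - δ)
            + ((p : ℕ) : ℂ) ^ (-s - γ - δ)) :=
    funext fun p => RSproof.local_tsum hα hβ hs p.2
  rw [hlocal] at heuler
  have hz : 1 < (s + α + β).re := by
    have h1 := abs_le.mp hα
    have h2 := abs_le.mp hβ
    simp only [Complex.add_re]
    linarith
  have hzeta := riemannZeta_eulerProduct_hasProd hz
  have hmul := hzeta.mul hQmult.hasProd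
  have hfinal := heuler.unique hmul
  have hcongr : ∑' m : ℕ, Ifun α γ (m + 1) * Ifun β δ (m + 1) * ((m + 1 : ℕ) : ℂ) ^ (-s)
      = ∑' m : ℕ, RSproof.Faf α β γ δ s (m + 1) :=
    tsum_congr fun m => (RSproof.Faf_apply α β γ δ s (Nat.succ_ne_zero m)).symm
  have hshift : ∑' n : ℕ, RSproof.Faf α β γ δ s n
      = ∑' m : ℕ, RSproof.Faf α β γ δ s (m + 1) := by
    rw [Summable.tsum_eq_zero_add hFsum.of_norm, ArithmeticFunction.map_zero, zero_add]
  rw [hcongr, ← hshift, hfinal]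
end

section
/- Let q be a positive integer and m a positive integer. Then e(m/q) = ∑_{d | gcd(m,q)} (1/φ(q/d)) ∑_{χ mod q/d} τ(χ̄) χ(m/d), where the inner sum is over all Dirichlet characters χ modulo q/d, χ̄ denotes the complex conjugate character, and τ(χ) = ∑_{a=1}^{Q} χ(a) e(a/Q) is the Gauss sum of a character χ modulo Q. -/
open scoped BigOperators

private lemma zmod_ring_inverse_eq_inv {n : ℕ} {a : ZMod n} (ha : IsUnit a) :
    Ring.inverse a = a⁻¹ := by
  obtain ⟨u, rfl⟩ := ha
  rw [Ring.inverse_unit, ZMod.inv_coe_unit]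

private lemma char_sum_key (n : ℕ) [NeZero n] (a c : ZMod n) :
    ∑ χ : DirichletCharacter ℂ n, (starRingEnd ℂ) (χ a) * χ c
      = if IsUnit a ∧ a = c then (n.totient : ℂ) else 0 := by
  haveI : NeZero (Monoid.exponent (ZMod n)ˣ) := ⟨Monoid.exponent_ne_zero_of_finite⟩
  by_cases ha : IsUnit a
  · have h1 : ∀ χ : DirichletCharacter ℂ n, (starRingEnd ℂ) (χ a) = χ a⁻¹ := fun χ => by
      rw [starRingEnd_apply, MulChar.star_apply', MulChar.inv_apply,
        zmod_ring_inverse_eq_inv ha]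
    simp only [h1]
    rw [DirichletCharacter.sum_char_inv_mul_char_eq ℂ ha c]
    simp [ha]
  · have h1 : ∀ χ : DirichletCharacter ℂ n, χ a = 0 := fun χ => χ.map_nonunit ha
    simp [h1, ha]

private lemma exp_mod (n : ℕ) (hn : 0 < n) (x : ℕ) :
    Complex.exp (2 * (Real.pi : ℂ) * Complex.I * (x : ℂ) / (n : ℂ))
      = Complex.exp (2 * (Real.pi : ℂ) * Complex.I * ((x % n : ℕ) : ℂ) / (n : ℂ)) := by
  have hn0 : (n : ℂ) ≠ 0 := Nat.cast_ne_zero.mpr hn.ne'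
  conv_lhs => rw [← Nat.mod_add_div x n]
  have h : (2 * (Real.pi : ℂ) * Complex.I * ((x % n + n * (x / n) : ℕ) : ℂ) / (n : ℂ))
      = 2 * (Real.pi : ℂ) * Complex.I * ((x % n : ℕ) : ℂ) / (n : ℂ)
        + ((x / n : ℕ) : ℂ) * (2 * (Real.pi : ℂ) * Complex.I) := by
    push_cast
    field_simp
  rw [h, Complex.exp_add, Complex.exp_nat_mul_two_pi_mul_I, mul_one]

private lemma exp_period (n : ℕ) (hn : 0 < n) (a b : ℕ) (h : a % n = b % n) :
    Complex.exp (2 * (Real.pi : ℂ) * Complex.I * (a : ℂ) / (n : ℂ))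
      = Complex.exp (2 * (Real.pi : ℂ) * Complex.I * (b : ℂ) / (n : ℂ)) := by
  rw [exp_mod n hn a, exp_mod n hn b, h]

private lemma core (n : ℕ) [NeZero n] (m' : ℕ) :
    (1 / (Nat.totient n : ℂ)) *
        ∑ χ : DirichletCharacter ℂ n,
          (∑ a ∈ Finset.Icc 1 n,
            (starRingEnd ℂ) (χ ((a : ℕ) : ZMod n)) *
              Complex.exp (2 * (Real.pi : ℂ) * Complex.I * (a : ℂ) / (n : ℂ))) *
          χ ((m' : ℕ) : ZMod n)
      = if Nat.Coprime m' n then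
          Complex.exp (2 * (Real.pi : ℂ) * Complex.I * (m' : ℂ) / (n : ℂ)) else 0 := by
  have hn : 0 < n := Nat.pos_of_ne_zero (NeZero.ne n)
  have swap : (∑ χ : DirichletCharacter ℂ n,
        (∑ a ∈ Finset.Icc 1 n, (starRingEnd ℂ) (χ ((a : ℕ) : ZMod n)) *
          Complex.exp (2 * (Real.pi : ℂ) * Complex.I * (a : ℂ) / (n : ℂ))) * χ ((m' : ℕ) : ZMod n))
      = ∑ a ∈ Finset.Icc 1 n,
          Complex.exp (2 * (Real.pi : ℂ) * Complex.I * (a : ℂ) / (n : ℂ)) *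
            ∑ χ : DirichletCharacter ℂ n,
              (starRingEnd ℂ) (χ ((a : ℕ) : ZMod n)) * χ ((m' : ℕ) : ZMod n) := by
    simp_rw [Finset.sum_mul, Finset.mul_sum]
    rw [Finset.sum_comm]
    exact Finset.sum_congr rfl fun a _ => Finset.sum_congr rfl fun χ _ => by ring
  rw [swap]
  simp_rw [char_sum_key n _ ((m' : ℕ) : ZMod n)]
  by_cases hco : Nat.Coprime m' n
  · rw [if_pos hco]
    have hcu : IsUnit ((m' : ℕ) : ZMod n) := (ZMod.isUnit_iff_coprime _ _).mpr hco
    have hmod : (if m' % n = 0 then n else m' % n) % n = m' % n := by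
      split_ifs with h
      · rw [Nat.mod_self, h]
      · exact Nat.mod_eq_of_lt (Nat.mod_lt m' hn)
    have ha0mem : (if m' % n = 0 then n else m' % n) ∈ Finset.Icc 1 n := by
      rw [Finset.mem_Icc]
      split_ifs with h
      · exact ⟨hn, le_refl n⟩
      · exact ⟨Nat.pos_of_ne_zero h, (Nat.mod_lt m' hn).le⟩
    have ha0c : (((if m' % n = 0 then n else m' % n) : ℕ) : ZMod n) = ((m' : ℕ) : ZMod n) := by
      rw [ZMod.natCast_eq_natCast_iff]
      exact hmod
    rw [Finset.sum_eq_single_of_mem (if m' % n = 0 then n else m' % n) ha0mem]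
    · have hcond : IsUnit (((if m' % n = 0 then n else m' % n) : ℕ) : ZMod n) ∧
          (((if m' % n = 0 then n else m' % n) : ℕ) : ZMod n) = ((m' : ℕ) : ZMod n) :=
        ⟨by rw [ha0c]; exact hcu, ha0c⟩
      rw [if_pos hcond]
      have hφ : ((Nat.totient n : ℕ) : ℂ) ≠ 0 :=
        Nat.cast_ne_zero.mpr (Nat.totient_pos.mpr hn).ne'
      have hE : Complex.exp (2 * (Real.pi : ℂ) * Complex.I *
            ((if m' % n = 0 then n else m' % n : ℕ) : ℂ) / (n : ℂ))
          = Complex.exp (2 * (Real.pi : ℂ) * Complex.I * (m' : ℂ) / (n : ℂ)) := by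
        exact exp_period n hn _ _ hmod
      rw [hE]
      field_simp
    · intro a haI hne
      rw [if_neg, mul_zero]
      rintro ⟨-, hac⟩
      apply hne
      rw [Finset.mem_Icc] at haI
      have h1 : a % n = m' % n := (ZMod.natCast_eq_natCast_iff _ _ _).mp hac
      rcases eq_or_lt_of_le haI.2 with h2 | h2
      · subst h2
        rw [Nat.mod_self] at h1
        rw [if_pos h1.symm]
      · rw [Nat.mod_eq_of_lt h2] at h1
        rw [if_neg, ← h1]
        omega
  · rw [if_neg hco]
    have hcu : ¬ IsUnit ((m' : ℕ) : ZMod n) :=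
      fun h => hco ((ZMod.isUnit_iff_coprime _ _).mp h)
    have h0 : ∀ a ∈ Finset.Icc 1 n,
        Complex.exp (2 * (Real.pi : ℂ) * Complex.I * (a : ℂ) / (n : ℂ)) *
          (if IsUnit ((a : ℕ) : ZMod n) ∧ ((a : ℕ) : ZMod n) = ((m' : ℕ) : ZMod n)
            then ((Nat.totient n : ℕ) : ℂ) else 0) = 0 := by
      intro a _
      rw [if_neg, mul_zero]
      rintro ⟨hu, hac⟩
      exact hcu (hac ▸ hu)
    rw [Finset.sum_congr rfl h0, Finset.sum_const_zero, mul_zero]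

private lemma term_eval (q m d : ℕ) (hq : 0 < q) (hd : 0 < d)
    (hdm : d ∣ m) (hdq : d ∣ q) :
    (1 / (Nat.totient (q / d) : ℂ)) *
        ∑ χ : DirichletCharacter ℂ (q / d),
          (∑ a ∈ Finset.Icc 1 (q / d),
            (starRingEnd ℂ) (χ ((a : ℕ) : ZMod (q / d))) *
              Complex.exp (2 * (Real.pi : ℂ) * Complex.I * (a : ℂ) / ((q / d : ℕ) : ℂ))) *
          χ (((m / d : ℕ) : ZMod (q / d)))
      = if Nat.Coprime (m / d) (q / d) then
          Complex.exp (2 * (Real.pi : ℂ) * Complex.I * (m : ℂ) / (q : ℂ)) else 0 := by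
  have hn : 0 < q / d := Nat.div_pos (Nat.le_of_dvd hq hdq) hd
  haveI : NeZero (q / d) := ⟨hn.ne'⟩
  rw [core (q / d) (m / d)]
  have hd0 : (d : ℂ) ≠ 0 := Nat.cast_ne_zero.mpr hd.ne'
  have hq0 : (q : ℂ) ≠ 0 := Nat.cast_ne_zero.mpr hq.ne'
  have hn0 : ((q / d : ℕ) : ℂ) ≠ 0 := Nat.cast_ne_zero.mpr hn.ne'
  have heq : 2 * (Real.pi : ℂ) * Complex.I * ((m / d : ℕ) : ℂ) / ((q / d : ℕ) : ℂ)
      = 2 * (Real.pi : ℂ) * Complex.I * (m : ℂ) / (q : ℂ) := by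
    rw [Nat.cast_div hdm hd0, Nat.cast_div hdq hd0]
    field_simp
  rw [heq]

theorem additive_character_via_multiplicative (q m : ℕ) (hq : 0 < q) (hm : 0 < m) :
    Complex.exp (2 * (Real.pi : ℂ) * Complex.I * (m : ℂ) / (q : ℂ))
      = ∑ d ∈ (Nat.gcd m q).divisors,
          (1 / (Nat.totient (q / d) : ℂ)) *
            ∑ χ : DirichletCharacter ℂ (q / d),
              (∑ a ∈ Finset.Icc 1 (q / d),
                (starRingEnd ℂ) (χ ((a : ℕ) : ZMod (q / d))) *
                  Complex.exp (2 * (Real.pi : ℂ) * Complex.I * (a : ℂ) / ((q / d : ℕ) : ℂ))) *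
              χ (((m / d : ℕ) : ZMod (q / d))) := by
  have hg : 0 < Nat.gcd m q := Nat.gcd_pos_of_pos_left q hm
  have step : ∀ d ∈ (Nat.gcd m q).divisors,
      (1 / (Nat.totient (q / d) : ℂ)) *
        ∑ χ : DirichletCharacter ℂ (q / d),
          (∑ a ∈ Finset.Icc 1 (q / d),
            (starRingEnd ℂ) (χ ((a : ℕ) : ZMod (q / d))) *
              Complex.exp (2 * (Real.pi : ℂ) * Complex.I * (a : ℂ) / ((q / d : ℕ) : ℂ))) *
          χ (((m / d : ℕ) : ZMod (q / d)))
      = if Nat.Coprime (m / d) (q / d) then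
          Complex.exp (2 * (Real.pi : ℂ) * Complex.I * (m : ℂ) / (q : ℂ)) else 0 := by
    intro d hdmem
    have hdg : d ∣ Nat.gcd m q := (Nat.mem_divisors.mp hdmem).1
    have hd : 0 < d := Nat.pos_of_mem_divisors hdmem
    exact term_eval q m d hq hd (hdg.trans (Nat.gcd_dvd_left m q))
      (hdg.trans (Nat.gcd_dvd_right m q))
  rw [Finset.sum_congr rfl step]
  rw [Finset.sum_eq_single_of_mem (Nat.gcd m q) (Nat.mem_divisors_self _ hg.ne')]
  · rw [if_pos (Nat.coprime_div_gcd_div_gcd hg)]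
  · intro d hdmem hne
    rw [if_neg]
    intro hco
    have hdg : d ∣ Nat.gcd m q := (Nat.mem_divisors.mp hdmem).1
    have hd : 0 < d := Nat.pos_of_mem_divisors hdmem
    obtain ⟨j, hj⟩ := hdg
    obtain ⟨k, hk⟩ := Nat.gcd_dvd_left m q
    obtain ⟨l, hl⟩ := Nat.gcd_dvd_right m q
    have hmdiv : m / d = j * k := by
      rw [hk, hj, Nat.mul_assoc, Nat.mul_div_cancel_left _ hd]
    have hqdiv : q / d = j * l := by
      rw [hl, hj, Nat.mul_assoc, Nat.mul_div_cancel_left _ hd]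
    have hjdvd : j ∣ Nat.gcd (m / d) (q / d) :=
      Nat.dvd_gcd ⟨k, hmdiv⟩ ⟨l, hqdiv⟩
    have hj1 : j = 1 := Nat.eq_one_of_dvd_one (hco ▸ hjdvd)
    exact hne (by rw [hj, hj1, mul_one] : d = Nat.gcd m q)
end

section
/- Let s be a complex number with Re s > 2. Then the integral over the vertical line Re z = 2 satisfies (1/2π) ∫_ℝ dy / ((2+iy)(s-2-iy)) = 1/s; equivalently, (1/2πi) ∫_{Re z = 2} dz/(z(s-z)) = 1/s, where the path is traversed upward. -/
open Complex Filter MeasureTheory Real intervalIntegral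

lemma div_R_tendsto (b : ℂ) : Tendsto (fun R : ℝ => b / R) atTop (nhds 0) := by
  have h1 : Tendsto (fun R : ℝ => ((R : ℂ))⁻¹) atTop (nhds 0) := by
    have := (Complex.continuous_ofReal.tendsto 0).comp tendsto_inv_atTop_zero
    simpa [Function.comp_def, Complex.ofReal_inv] using this
  simpa [div_eq_mul_inv] using h1.const_mul b

lemma logabs_cont {z : ℂ} (hz : z ≠ 0) :
    ContinuousAt (fun z => Real.log ‖z‖) z :=
  (Real.continuousAt_log (norm_ne_zero_iff.mpr hz)).comp continuous_norm.continuousAt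

lemma arg_add_RI (b : ℂ) (hb : 0 < b.re) :
    Tendsto (fun R : ℝ => Complex.arg (b + R * Complex.I)) atTop (nhds (π / 2)) := by
  have h0 : Tendsto (fun R : ℝ => b / R + Complex.I) atTop (nhds Complex.I) := by
    simpa using (div_R_tendsto b).add (tendsto_const_nhds (x := Complex.I))
  have hc : ContinuousAt Complex.arg Complex.I :=
    Complex.continuousAt_arg (by simp [Complex.mem_slitPlane_iff])
  have := hc.tendsto.comp h0
  rw [Complex.arg_I] at this
  apply this.congr'
  filter_upwards [eventually_gt_atTop (0:ℝ)] with R hR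
  have hR' : (R:ℂ) ≠ 0 := by exact_mod_cast hR.ne'
  have e : b + R * Complex.I = (R:ℝ) * (b / R + Complex.I) := by
    rw [mul_add, mul_div_cancel₀ b hR']
  rw [Function.comp_apply, ← Complex.arg_real_mul _ hR, ← e]

lemma arg_sub_RI (b : ℂ) (hb : 0 < b.re) :
    Tendsto (fun R : ℝ => Complex.arg (b - R * Complex.I)) atTop (nhds (-(π / 2))) := by
  have h0 : Tendsto (fun R : ℝ => b / R - Complex.I) atTop (nhds (-Complex.I)) := by
    simpa using (div_R_tendsto b).sub (tendsto_const_nhds (x := Complex.I))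
  have hc : ContinuousAt Complex.arg (-Complex.I) :=
    Complex.continuousAt_arg (by simp [Complex.mem_slitPlane_iff])
  have := hc.tendsto.comp h0
  rw [Complex.arg_neg_I] at this
  apply this.congr'
  filter_upwards [eventually_gt_atTop (0:ℝ)] with R hR
  have hR' : (R:ℂ) ≠ 0 := by exact_mod_cast hR.ne'
  have e : b - R * Complex.I = (R:ℝ) * (b / R - Complex.I) := by
    rw [mul_sub, mul_div_cancel₀ b hR']
  rw [Function.comp_apply, ← Complex.arg_real_mul _ hR, ← e]

lemma abs_log_diff (b : ℂ) (hb : 0 < b.re) :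
    Tendsto (fun R : ℝ => Real.log ‖b - R * Complex.I‖
      - Real.log ‖b + R * Complex.I‖) atTop (nhds 0) := by
  have hm : Tendsto (fun R : ℝ => Real.log ‖b / R - Complex.I‖
      - Real.log ‖b / R + Complex.I‖) atTop (nhds 0) := by
    have h1 : Tendsto (fun R : ℝ => b / R - Complex.I) atTop (nhds (-Complex.I)) := by
      simpa using (div_R_tendsto b).sub (tendsto_const_nhds (x := Complex.I))
    have h2 : Tendsto (fun R : ℝ => b / R + Complex.I) atTop (nhds Complex.I) := by
      simpa using (div_R_tendsto b).add (tendsto_const_nhds (x := Complex.I))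
    have hc1 := logabs_cont (neg_ne_zero.mpr Complex.I_ne_zero)
    have hc2 := logabs_cont Complex.I_ne_zero
    have := (hc1.tendsto.comp h1).sub (hc2.tendsto.comp h2)
    simpa using this
  apply hm.congr'
  filter_upwards [eventually_gt_atTop (0:ℝ)] with R hR
  have hR' : (R:ℂ) ≠ 0 := by exact_mod_cast hR.ne'
  have e1 : b - R * Complex.I = (R:ℝ) * (b / R - Complex.I) := by
    rw [mul_sub, mul_div_cancel₀ b hR']
  have e2 : b + R * Complex.I = (R:ℝ) * (b / R + Complex.I) := by
    rw [mul_add, mul_div_cancel₀ b hR']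
  rw [e1, e2]
  simp only [norm_mul, Complex.norm_real, Real.norm_eq_abs, abs_of_pos hR]
  rw [Real.log_mul hR.ne' ?h1, Real.log_mul hR.ne' ?h2]
  · ring
  case h1 =>
    simp only [ne_eq, norm_eq_zero]
    intro h
    have h' := congrArg Complex.re h
    simp only [Complex.sub_re, Complex.div_ofReal_re, Complex.I_re, Complex.zero_re,
      sub_zero] at h'
    exact absurd h' (div_pos hb hR).ne'
  case h2 =>
    simp only [ne_eq, norm_eq_zero]
    intro h
    have h' := congrArg Complex.re h
    simp only [Complex.add_re, Complex.div_ofReal_re, Complex.I_re, Complex.zero_re,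
      add_zero] at h'
    exact absurd h' (div_pos hb hR).ne'

lemma log_diff_tendsto (b : ℂ) (hb : 0 < b.re) :
    Tendsto (fun R : ℝ => Complex.log (b - R * Complex.I) - Complex.log (b + R * Complex.I))
      atTop (nhds (-π * Complex.I)) := by
  have h1 := abs_log_diff b hb
  have h2 := (arg_sub_RI b hb).sub (arg_add_RI b hb)
  have h3 := ((Complex.continuous_ofReal.tendsto 0).comp h1).add
    (((Complex.continuous_ofReal.tendsto _).comp h2).mul_const Complex.I)
  have : ((0:ℝ) : ℂ) + ((-(π/2) - π/2 : ℝ) : ℂ) * Complex.I = -π * Complex.I := by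
    push_cast; ring
  rw [this] at h3
  apply h3.congr
  intro R
  simp only [Function.comp_apply, Complex.log]
  push_cast
  ring


theorem vertical_line_integral_eq (s : ℂ) (hs : 2 < s.re) :
    (1 / (2 * (Real.pi : ℂ))) *
        ∫ y : ℝ, 1 / ((2 + (y : ℂ) * Complex.I) * (s - 2 - (y : ℂ) * Complex.I))
      = 1 / s := by
  set c : ℝ := s.re - 2 with hc_def
  set d : ℝ := s.im with hd_def
  have hc : 0 < c := by simp [hc_def]; linarith
  have hs0 : s ≠ 0 := by
    intro h; rw [h] at hs; simp at hs; linarith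
  -- nonvanishing denominators
  have hne1 : ∀ y : ℝ, (2 + (y:ℂ) * Complex.I) ≠ 0 := by
    intro y h
    have := congrArg Complex.re h
    simp at this
  have hne2 : ∀ y : ℝ, (s - 2 - (y:ℂ) * Complex.I) ≠ 0 := by
    intro y h
    have := congrArg Complex.re h
    simp at this
    linarith
  -- the integrand and the partial fractions decomposition
  set f : ℝ → ℂ := fun y => 1 / ((2 + (y:ℂ) * Complex.I) * (s - 2 - (y:ℂ) * Complex.I)) with hf_def
  set g : ℝ → ℂ := fun y => (2 + (y:ℂ) * Complex.I)⁻¹ + (s - 2 - (y:ℂ) * Complex.I)⁻¹ with hg_def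
  have hfg : ∀ y : ℝ, f y = s⁻¹ * g y := by
    intro y
    simp only [hf_def, hg_def]
    rw [inv_add_inv (hne1 y) (hne2 y),
      show (2 + (y:ℂ) * Complex.I) + (s - 2 - (y:ℂ) * Complex.I) = s from by ring,
      ← mul_div_assoc, inv_mul_cancel₀ hs0]
  -- continuity
  have cont1 : Continuous fun y : ℝ => 2 + (y:ℂ) * Complex.I := by fun_prop
  have cont2 : Continuous fun y : ℝ => s - 2 - (y:ℂ) * Complex.I := by fun_prop
  have contf : Continuous f := by
    simp only [hf_def]
    simp only [one_div]
    exact ((cont1.mul cont2).inv₀ (fun y => mul_ne_zero (hne1 y) (hne2 y)))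
  have contg : Continuous g := (cont1.inv₀ hne1).add (cont2.inv₀ hne2)
  -- norm computations
  have hnormsq1 : ∀ y : ℝ, Complex.normSq (2 + (y:ℂ) * Complex.I) = 4 + y^2 := by
    intro y; simp [Complex.normSq_apply]; ring
  have hnormsq2 : ∀ y : ℝ, Complex.normSq (s - 2 - (y:ℂ) * Complex.I) = c^2 + (d - y)^2 := by
    intro y; simp [Complex.normSq_apply, hc_def, hd_def]; ring
  -- key polynomial inequality
  have key : ∀ y : ℝ, c^2 * ((1 + y^2)^2) ≤ (1 + 2*d^2 + 2*c^2) * ((4 + y^2) * (c^2 + (d - y)^2)) := by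
    intro y
    nlinarith [sq_nonneg (c * (y - 2*d)), sq_nonneg (c*y), sq_nonneg (d - y), sq_nonneg (c*(d-y)),
      sq_nonneg (d*(d-y)), sq_nonneg d, sq_nonneg (c*y*(d-y)), sq_nonneg (y*(d-y)),
      sq_nonneg (c*y^2), mul_pos hc hc, sq_nonneg (y^2*(d-y)), sq_nonneg (d*y), sq_nonneg (c*d),
      sq_nonneg (y*(y-2*d)), sq_nonneg (y^2 - 2*d*y)]
  -- integrability of f
  set C : ℝ := Real.sqrt (1 + 2*d^2 + 2*c^2) / c with hC_def
  have hCpos : 0 < C := by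
    apply div_pos _ hc
    apply Real.sqrt_pos.mpr
    positivity
  have hbound : ∀ y : ℝ, ‖f y‖ ≤ C * (1 + y^2)⁻¹ := by
    intro y
    have habs : ‖f y‖ = (‖2 + (y:ℂ) * Complex.I‖ * ‖s - 2 - (y:ℂ) * Complex.I‖)⁻¹ := by
      simp only [hf_def, one_div, norm_inv, norm_mul]
    have hy2 : (0:ℝ) < 1 + y^2 := by positivity
    have habs_pos : 0 < ‖2 + (y:ℂ) * Complex.I‖ * ‖s - 2 - (y:ℂ) * Complex.I‖ :=
      mul_pos (norm_pos_iff.mpr (hne1 y)) (norm_pos_iff.mpr (hne2 y))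
    have hsq : (1 + y^2)^2 ≤ (C * (‖2 + (y:ℂ) * Complex.I‖ * ‖s - 2 - (y:ℂ) * Complex.I‖))^2 := by
      rw [mul_pow, mul_pow, Complex.sq_norm, Complex.sq_norm, hnormsq1, hnormsq2, hC_def, div_pow,
        Real.sq_sqrt (by positivity)]
      rw [div_mul_eq_mul_div, le_div_iff₀ (by positivity)]
      calc (1+y^2)^2 * c^2 = c^2 * ((1+y^2)^2) := by ring
        _ ≤ (1 + 2*d^2 + 2*c^2) * ((4 + y^2) * (c^2 + (d - y)^2)) := key y
        _ = (1 + 2*d^2 + 2*c^2) * ((4 + y^2) * (c^2 + (d - y)^2)) * 1 := by ring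
        _ ≤ _ := le_of_eq (by ring)
    have hle : (1 + y^2) ≤ C * (‖2 + (y:ℂ) * Complex.I‖ * ‖s - 2 - (y:ℂ) * Complex.I‖) := by
      have h' := Real.sqrt_le_sqrt hsq
      rwa [Real.sqrt_sq hy2.le, Real.sqrt_sq (by positivity)] at h'
    rw [habs]
    have h2 : C⁻¹ * (1 + y^2) ≤ ‖2 + (y:ℂ) * Complex.I‖ * ‖s - 2 - (y:ℂ) * Complex.I‖ := by
      rw [inv_mul_le_iff₀ hCpos]
      exact hle
    calc (‖2 + (y:ℂ) * Complex.I‖ * ‖s - 2 - (y:ℂ) * Complex.I‖)⁻¹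
        ≤ (C⁻¹ * (1 + y^2))⁻¹ := by
          apply inv_anti₀ (by positivity) h2
      _ = C * (1 + y^2)⁻¹ := by rw [mul_inv, inv_inv]
  -- integrability
  have hfInt : Integrable f := by
    refine Integrable.mono' (integrable_inv_one_add_sq.const_mul C) contf.aestronglyMeasurable ?_
    exact ae_of_all _ hbound
  have hgInt : Integrable g := by
    have h := hfInt.const_mul s
    refine h.congr (ae_of_all _ fun y => ?_)
    show s * f y = g y
    rw [hfg y, ← mul_assoc, mul_inv_cancel₀ hs0, one_mul]
  -- antiderivative
  set F : ℝ → ℂ := fun y => -Complex.I * Complex.log (2 + (y:ℂ) * Complex.I)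
      + Complex.I * Complex.log (s - 2 - (y:ℂ) * Complex.I) with hF_def
  have hF : ∀ y : ℝ, HasDerivAt F (g y) y := by
    intro y
    have h1 : HasDerivAt (fun y : ℝ => 2 + (y:ℂ) * Complex.I) Complex.I y := by
      simpa using (((hasDerivAt_id y).ofReal_comp).mul_const Complex.I).const_add (2:ℂ)
    have h2 : HasDerivAt (fun y : ℝ => s - 2 - (y:ℂ) * Complex.I) (-Complex.I) y := by
      simpa using (((hasDerivAt_id y).ofReal_comp).mul_const Complex.I).const_sub (s-2)
    have hm1 : (2 + (y:ℂ) * Complex.I) ∈ Complex.slitPlane := by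
      rw [Complex.mem_slitPlane_iff]
      left
      simp
    have hm2 : (s - 2 - (y:ℂ) * Complex.I) ∈ Complex.slitPlane := by
      rw [Complex.mem_slitPlane_iff]
      left
      simp
      linarith
    have hl1 := h1.clog_real hm1
    have hl2 := h2.clog_real hm2
    have hsum := (hl1.const_mul (-Complex.I)).add (hl2.const_mul Complex.I)
    convert hsum using 1
    show (2 + (y:ℂ) * Complex.I)⁻¹ + (s - 2 - (y:ℂ) * Complex.I)⁻¹ = _
    linear_combination ((2 + (y:ℂ) * Complex.I)⁻¹ + (s - 2 - (y:ℂ) * Complex.I)⁻¹) * Complex.I_mul_I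
    rfl
    rfl
  have hftc : ∀ R : ℝ, ∫ y in (-R)..R, g y = F R - F (-R) := fun R =>
    intervalIntegral.integral_eq_sub_of_hasDerivAt (fun y _ => hF y) hgInt.intervalIntegrable
  have hlim1 : Tendsto (fun R : ℝ => F R - F (-R)) atTop (nhds (2*(π:ℂ))) := by
    have l1 := log_diff_tendsto 2 (by norm_num)
    have l2 := log_diff_tendsto (s-2) (by simp; linarith)
    have h := (l1.const_mul Complex.I).add (l2.const_mul Complex.I)
    have heq : Complex.I * (-↑π * Complex.I) + Complex.I * (-↑π * Complex.I) = 2*(π:ℂ) := by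
      rw [show Complex.I * (-↑π * Complex.I) + Complex.I * (-↑π * Complex.I)
        = (-2*(π:ℂ)) * (Complex.I * Complex.I) from by ring, Complex.I_mul_I]
      ring
    rw [heq] at h
    apply h.congr
    intro R
    simp only [hF_def, Complex.ofReal_neg, neg_mul, ← sub_eq_add_neg]
    ring
  have hint_tendsto : Tendsto (fun R : ℝ => ∫ y in (-R)..R, g y) atTop (nhds (∫ y, g y)) :=
    MeasureTheory.intervalIntegral_tendsto_integral hgInt tendsto_neg_atTop_atBot tendsto_id
  have hg_val : (∫ y, g y) = 2*(π:ℂ) :=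
    tendsto_nhds_unique hint_tendsto (hlim1.congr fun R => (hftc R).symm)
  have hfint_val : (∫ y, f y) = s⁻¹ * (2*(π:ℂ)) := by
    calc (∫ y, f y) = ∫ y, s⁻¹ * g y := by simp only [hfg]
      _ = s⁻¹ * ∫ y, g y := by rw [MeasureTheory.integral_const_mul]
      _ = s⁻¹ * (2*(π:ℂ)) := by rw [hg_val]
  rw [show (∫ (y : ℝ), 1 / ((2 + (y:ℂ) * Complex.I) * (s - 2 - (y:ℂ) * Complex.I))) = ∫ y, f y
    from rfl, hfint_val]
  have hpi : (π:ℂ) ≠ 0 := Complex.ofReal_ne_zero.mpr Real.pi_ne_zero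
  field_simp
end
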